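/- Let b ≥ 2, s ≥ 1, n ≥ 2, and let P_n and P_n' each be a sequence of n points in [0,1)^s such that for each j the j-th coordinates of the points are pairwise distinct, with associated functions ψ and ψ' respectively. Then the following are equivalent: (1) for all x, y ∈ [0,1]^s, the Lebesgue integral of ψ over R(x,y) is at most the Lebesgue integral of ψ' over R(x,y); (2) C_b(k;P_n) ≤ C_b(k;P_n') for all k ∈ ℕ^s. -/

import Mathlib

open MeasureTheory
open scoped Classical

noncomputable def gammaB (b : ℕ) (x y : ℝ) : ℕ∞ :=
  if x = y then ⊤
  else (↑(sInf {i : ℕ | ⌊(b : ℝ) ^ i * x⌋ = ⌊(b : ℝ) ^ i * y⌋ ∧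
      ⌊(b : ℝ) ^ (i + 1) * x⌋ ≠ ⌊(b : ℝ) ^ (i + 1) * y⌋}) : ℕ∞)

section Agr
variable {b : ℕ} (hb : 2 ≤ b)

lemma one_le_B (hb : 2 ≤ b) : (1:ℝ) ≤ (b:ℝ) := by exact_mod_cast Nat.one_le_of_lt hb
lemma one_lt_B (hb : 2 ≤ b) : (1:ℝ) < (b:ℝ) := by exact_mod_cast hb

/-- floor of `b*w` determines floor of `w`. -/
lemma floor_of_floor_mul (hb : 2 ≤ b) (w : ℝ) : ⌊(b:ℝ) * w⌋ / (b:ℤ) = ⌊w⌋ := by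
  have hb0 : (0:ℝ) < b := by positivity
  have h1 : (b:ℤ) * ⌊w⌋ ≤ ⌊(b:ℝ)*w⌋ := by
    rw [Int.le_floor]
    push_cast
    nlinarith [Int.floor_le w]
  have h2 : ⌊(b:ℝ)*w⌋ < (b:ℤ) * ⌊w⌋ + b := by
    rw [Int.floor_lt]
    push_cast
    nlinarith [Int.lt_floor_add_one w]
  set X := ⌊(b:ℝ)*w⌋ with hX
  have hbz : (b:ℤ) ≠ 0 := by positivity
  have : X = (X - (b:ℤ)*⌊w⌋) + (b:ℤ)*⌊w⌋ := by ring
  rw [this, Int.add_mul_ediv_left _ _ hbz, Int.ediv_eq_zero_of_lt (by omega) (by omega),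
    zero_add]

lemma agr_succ (hb : 2 ≤ b) {k : ℕ} {u v : ℝ}
    (h : ⌊(b:ℝ)^(k+1) * u⌋ = ⌊(b:ℝ)^(k+1) * v⌋) : ⌊(b:ℝ)^k * u⌋ = ⌊(b:ℝ)^k * v⌋ := by
  have hu := floor_of_floor_mul hb ((b:ℝ)^k * u)
  have hv := floor_of_floor_mul hb ((b:ℝ)^k * v)
  have e : ∀ w : ℝ, (b:ℝ) * ((b:ℝ)^k * w) = (b:ℝ)^(k+1) * w := by intro w; ring
  rw [e] at hu hv
  rw [← hu, ← hv, h]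

lemma agr_mono (hb : 2 ≤ b) {k m : ℕ} (hkm : k ≤ m) {u v : ℝ}
    (h : ⌊(b:ℝ)^m * u⌋ = ⌊(b:ℝ)^m * v⌋) : ⌊(b:ℝ)^k * u⌋ = ⌊(b:ℝ)^k * v⌋ := by
  induction m with
  | zero =>
    have : k = 0 := Nat.le_zero.mp hkm
    subst this; exact h
  | succ m ih =>
    rcases Nat.lt_or_ge k (m+1) with hk | hk
    · exact ih (by omega) (agr_succ hb h)
    · have : k = m + 1 := by omega
      exact this ▸ h

lemma exists_not_agr (hb : 2 ≤ b) {u v : ℝ} (huv : u ≠ v) :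
    ∃ k : ℕ, ⌊(b:ℝ)^k * u⌋ ≠ ⌊(b:ℝ)^k * v⌋ := by
  have h1 : (0:ℝ) < |u - v| := by simpa [sub_eq_zero] using sub_ne_zero_of_ne huv
  obtain ⟨k, hk⟩ := pow_unbounded_of_one_lt (|u - v|⁻¹) (one_lt_B hb)
  refine ⟨k, fun h => ?_⟩
  have h2 : |(b:ℝ)^k * u - (b:ℝ)^k * v| < 1 := Int.abs_sub_lt_one_of_floor_eq_floor h
  rw [← mul_sub, abs_mul, abs_of_pos (by positivity : (0:ℝ) < (b:ℝ)^k)] at h2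
  have h3 := mul_lt_mul_of_pos_right hk h1
  rw [inv_mul_cancel₀ h1.ne'] at h3
  linarith

end Agr

section Gamma
variable {b : ℕ}

lemma agr_zero {u v : ℝ} (hu : u ∈ Set.Ico (0:ℝ) 1) (hv : v ∈ Set.Ico (0:ℝ) 1) :
    ⌊(b:ℝ)^0 * u⌋ = ⌊(b:ℝ)^0 * v⌋ := by
  simp only [pow_zero, one_mul]
  rw [Int.floor_eq_zero_iff.2 (by simpa using hu), Int.floor_eq_zero_iff.2 (by simpa using hv)]

/-- The separation level of two distinct points of `[0,1)`. -/
noncomputable def tsep (b : ℕ) (u v : ℝ) : ℕ :=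
  sInf {k : ℕ | ⌊(b:ℝ)^k * u⌋ ≠ ⌊(b:ℝ)^k * v⌋} - 1

lemma tsep_spec (hb : 2 ≤ b) {u v : ℝ} (hu : u ∈ Set.Ico (0:ℝ) 1) (hv : v ∈ Set.Ico (0:ℝ) 1)
    (huv : u ≠ v) :
    ⌊(b:ℝ)^(tsep b u v) * u⌋ = ⌊(b:ℝ)^(tsep b u v) * v⌋ ∧
      ⌊(b:ℝ)^(tsep b u v + 1) * u⌋ ≠ ⌊(b:ℝ)^(tsep b u v + 1) * v⌋ := by
  have hne : {k : ℕ | ⌊(b:ℝ)^k * u⌋ ≠ ⌊(b:ℝ)^k * v⌋}.Nonempty := exists_not_agr hb huv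
  have hmem := Nat.sInf_mem hne
  set N := sInf {k : ℕ | ⌊(b:ℝ)^k * u⌋ ≠ ⌊(b:ℝ)^k * v⌋} with hN
  have hN0 : N ≠ 0 := by
    intro h
    exact (h ▸ hmem) (agr_zero hu hv)
  have ht : tsep b u v = N - 1 := rfl
  constructor
  · have : N - 1 ∉ {k : ℕ | ⌊(b:ℝ)^k * u⌋ ≠ ⌊(b:ℝ)^k * v⌋} := Nat.notMem_of_lt_sInf (by omega)
    rw [ht]
    simpa using this
  · have hh : N - 1 + 1 = N := by omega
    rw [ht, hh]
    exact hmem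

lemma agr_iff_le_tsep (hb : 2 ≤ b) {u v : ℝ} (hu : u ∈ Set.Ico (0:ℝ) 1)
    (hv : v ∈ Set.Ico (0:ℝ) 1) (huv : u ≠ v) (k : ℕ) :
    ⌊(b:ℝ)^k * u⌋ = ⌊(b:ℝ)^k * v⌋ ↔ k ≤ tsep b u v := by
  obtain ⟨h1, h2⟩ := tsep_spec hb hu hv huv
  constructor
  · intro h
    by_contra hk
    exact h2 (agr_mono hb (by omega) h)
  · intro h
    exact agr_mono hb h h1

lemma gammaB_eq_tsep (hb : 2 ≤ b) {u v : ℝ} (hu : u ∈ Set.Ico (0:ℝ) 1)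
    (hv : v ∈ Set.Ico (0:ℝ) 1) (huv : u ≠ v) :
    gammaB b u v = (tsep b u v : ℕ∞) := by
  rw [gammaB, if_neg huv]
  congr 1
  have hset : {i : ℕ | ⌊(b : ℝ) ^ i * u⌋ = ⌊(b : ℝ) ^ i * v⌋ ∧
      ⌊(b : ℝ) ^ (i + 1) * u⌋ ≠ ⌊(b : ℝ) ^ (i + 1) * v⌋} = {tsep b u v} := by
    ext i
    simp only [Set.mem_setOf_eq, Set.mem_singleton_iff]
    rw [agr_iff_le_tsep hb hu hv huv i]
    constructor
    · rintro ⟨hi, hi2⟩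
      have hi2' : ¬ (i+1 ≤ tsep b u v) := fun hh => hi2 ((agr_iff_le_tsep hb hu hv huv (i+1)).2 hh)
      omega
    · rintro rfl
      exact ⟨le_refl _, (tsep_spec hb hu hv huv).2⟩
  rw [hset, csInf_singleton]

lemma gammaB_eq_iff (hb : 2 ≤ b) {u v : ℝ} (hu : u ∈ Set.Ico (0:ℝ) 1)
    (hv : v ∈ Set.Ico (0:ℝ) 1) (c : ℕ) :
    gammaB b u v = (c : ℕ∞) ↔
      (⌊(b:ℝ)^c * u⌋ = ⌊(b:ℝ)^c * v⌋ ∧ ⌊(b:ℝ)^(c+1) * u⌋ ≠ ⌊(b:ℝ)^(c+1) * v⌋) := by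
  by_cases huv : u = v
  · subst huv
    rw [gammaB, if_pos rfl]
    simp
  · rw [gammaB_eq_tsep hb hu hv huv, Nat.cast_inj,
      agr_iff_le_tsep hb hu hv huv c]
    constructor
    · rintro rfl
      exact ⟨le_refl _, (tsep_spec hb hu hv huv).2⟩
    · rintro ⟨h1, h2⟩
      have h2' : ¬ (c+1 ≤ tsep b u v) := fun hh => h2 ((agr_iff_le_tsep hb hu hv huv (c+1)).2 hh)
      omega

lemma le_gammaB_iff (hb : 2 ≤ b) {u v : ℝ} (hu : u ∈ Set.Ico (0:ℝ) 1)
    (hv : v ∈ Set.Ico (0:ℝ) 1) (k : ℕ) :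
    (k : ℕ∞) ≤ gammaB b u v ↔ ⌊(b:ℝ)^k * u⌋ = ⌊(b:ℝ)^k * v⌋ := by
  by_cases huv : u = v
  · subst huv; rw [gammaB, if_pos rfl]; simp
  · rw [gammaB_eq_tsep hb hu hv huv, Nat.cast_le, agr_iff_le_tsep hb hu hv huv k]

lemma gammaB_ne_top (hb : 2 ≤ b) {u v : ℝ} (hu : u ∈ Set.Ico (0:ℝ) 1)
    (hv : v ∈ Set.Ico (0:ℝ) 1) (huv : u ≠ v) : gammaB b u v ≠ ⊤ := by
  rw [gammaB_eq_tsep hb hu hv huv]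
  exact ENat.coe_ne_top _

lemma gammaB_top_iff (hb : 2 ≤ b) {u v : ℝ} (hu : u ∈ Set.Ico (0:ℝ) 1)
    (hv : v ∈ Set.Ico (0:ℝ) 1) : gammaB b u v = ⊤ ↔ u = v := by
  constructor
  · intro h; by_contra huv; exact gammaB_ne_top hb hu hv huv h
  · intro h; subst h; rw [gammaB, if_pos rfl]

lemma gammaB_coe_toNat (hb : 2 ≤ b) {u v : ℝ} (hu : u ∈ Set.Ico (0:ℝ) 1)
    (hv : v ∈ Set.Ico (0:ℝ) 1) (huv : u ≠ v) :
    ((gammaB b u v).toNat : ℕ∞) = gammaB b u v :=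
  ENat.coe_toNat (gammaB_ne_top hb hu hv huv)

lemma gammaB_symm (b : ℕ) (u v : ℝ) : gammaB b u v = gammaB b v u := by
  unfold gammaB
  by_cases h : u = v
  · subst h; simp
  · rw [if_neg h, if_neg (Ne.symm h)]
    congr 2
    ext i
    constructor <;> rintro ⟨h1, h2⟩ <;> exact ⟨h1.symm, fun hh => h2 hh.symm⟩

end Gamma

section OneDim
variable {b : ℕ}

def AsetD (b k : ℕ) (x y : ℝ) : Set (ℝ × ℝ) :=
  {p | p.1 ∈ Set.Ico 0 x ∧ p.2 ∈ Set.Ico 0 y ∧ ⌊(b:ℝ)^k * p.1⌋ = ⌊(b:ℝ)^k * p.2⌋}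

def GsetD (b c : ℕ) (x y : ℝ) : Set (ℝ × ℝ) :=
  {p | p.1 ∈ Set.Ico 0 x ∧ p.2 ∈ Set.Ico 0 y ∧ gammaB b p.1 p.2 = (c:ℕ∞)}

noncomputable def SK (b k : ℕ) (x y : ℝ) : ℝ := (volume (AsetD b k x y)).toReal

noncomputable def FF (b c : ℕ) (x y : ℝ) : ℝ := (volume (GsetD b c x y)).toReal

noncomputable def ffD (b c : ℕ) (x y : ℝ) : ℝ := (b:ℝ)^(1+c)/((b:ℝ)-1) * FF b c x y

lemma measurableSet_AsetD (b k : ℕ) (x y : ℝ) : MeasurableSet (AsetD b k x y) := by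
  have h1 : AsetD b k x y = (Set.Ico 0 x ×ˢ Set.Ico 0 y) ∩
      {p : ℝ × ℝ | ⌊(b:ℝ)^k * p.1⌋ = ⌊(b:ℝ)^k * p.2⌋} := by
    ext p; simp [AsetD, Set.mem_prod, and_assoc]
  rw [h1]
  refine (measurableSet_Ico.prod measurableSet_Ico).inter ?_
  exact measurableSet_eq_fun
    ((measurable_fst.const_mul _).floor) ((measurable_snd.const_mul _).floor)

lemma AsetD_subset_box {x y : ℝ} (hx : x ≤ 1) (hy : y ≤ 1) (k : ℕ) :
    AsetD b k x y ⊆ Set.Ico (0:ℝ) 1 ×ˢ Set.Ico (0:ℝ) 1 := by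
  rintro p ⟨h1, h2, _⟩
  exact ⟨⟨h1.1, lt_of_lt_of_le h1.2 hx⟩, ⟨h2.1, lt_of_lt_of_le h2.2 hy⟩⟩

lemma volume_box_ne_top : volume (Set.Ico (0:ℝ) 1 ×ˢ Set.Ico (0:ℝ) 1) ≠ ⊤ := by
  rw [Measure.volume_eq_prod ℝ ℝ, Measure.prod_prod, Real.volume_Ico]
  simp

lemma volume_AsetD_ne_top {x y : ℝ} (hx : x ≤ 1) (hy : y ≤ 1) (k : ℕ) :
    volume (AsetD b k x y) ≠ ⊤ :=
  fun h => volume_box_ne_top (top_le_iff.mp (h ▸ measure_mono (AsetD_subset_box hx hy k)))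

lemma floor_eq_nat_iff (hb : 2 ≤ b) {k : ℕ} (m : ℕ) {u : ℝ} :
    ⌊(b:ℝ)^k * u⌋ = (m:ℤ) ↔ u ∈ Set.Ico ((m:ℝ)/(b:ℝ)^k) (((m:ℝ)+1)/(b:ℝ)^k) := by
  have hB : (0:ℝ) < (b:ℝ)^k := by positivity
  rw [Int.floor_eq_iff]
  constructor
  · rintro ⟨h1, h2⟩
    constructor
    · rw [div_le_iff₀ hB]; push_cast at h1 ⊢; linarith
    · rw [lt_div_iff₀ hB]; push_cast at h2 ⊢; linarith
  · rintro ⟨h1, h2⟩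
    rw [div_le_iff₀ hB] at h1
    rw [lt_div_iff₀ hB] at h2
    constructor
    · push_cast; linarith
    · push_cast; linarith

lemma AsetD_eq_iUnion (hb : 2 ≤ b) {x y : ℝ} (hx : x ≤ 1) (hy : y ≤ 1) (k : ℕ) :
    AsetD b k x y = ⋃ m ∈ Finset.range (b^k),
      (Set.Ico ((m:ℝ)/(b:ℝ)^k) (((m:ℝ)+1)/(b:ℝ)^k) ∩ Set.Ico 0 x) ×ˢ
      (Set.Ico ((m:ℝ)/(b:ℝ)^k) (((m:ℝ)+1)/(b:ℝ)^k) ∩ Set.Ico 0 y) := by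
  have hB : (0:ℝ) < (b:ℝ)^k := by positivity
  ext p
  simp only [Set.mem_iUnion, Finset.mem_range, Set.mem_prod, Set.mem_inter_iff, exists_prop]
  constructor
  · rintro ⟨h1, h2, h3⟩
    have hM0 : 0 ≤ ⌊(b:ℝ)^k * p.1⌋ := Int.floor_nonneg.2 (by nlinarith [h1.1])
    have hMlt : ⌊(b:ℝ)^k * p.1⌋ < ((b^k : ℕ) : ℤ) := by
      rw [Int.floor_lt]
      push_cast
      nlinarith [h1.2]
    refine ⟨⌊(b:ℝ)^k * p.1⌋.toNat, by omega, ⟨?_, h1⟩, ⟨?_, h2⟩⟩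
    · rw [← floor_eq_nat_iff hb]
      omega
    · rw [← floor_eq_nat_iff hb, ← h3]
      omega
  · rintro ⟨m, hm, ⟨hp1, hx1⟩, ⟨hp2, hy1⟩⟩
    refine ⟨hx1, hy1, ?_⟩
    rw [(floor_eq_nat_iff hb m).2 hp1, (floor_eq_nat_iff hb m).2 hp2]

noncomputable def llen (b k m : ℕ) (z : ℝ) : ℝ :=
  (volume (Set.Ico ((m:ℝ)/(b:ℝ)^k) (((m:ℝ)+1)/(b:ℝ)^k) ∩ Set.Ico 0 z)).toReal

lemma llen_ne_top (b k m : ℕ) (z : ℝ) :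
    volume (Set.Ico ((m:ℝ)/(b:ℝ)^k) (((m:ℝ)+1)/(b:ℝ)^k) ∩ Set.Ico 0 z) ≠ ⊤ := by
  refine fun h => ?_
  have : volume (Set.Ico ((m:ℝ)/(b:ℝ)^k) (((m:ℝ)+1)/(b:ℝ)^k) ∩ Set.Ico 0 z) ≤
      volume (Set.Ico ((m:ℝ)/(b:ℝ)^k) (((m:ℝ)+1)/(b:ℝ)^k)) :=
    measure_mono Set.inter_subset_left
  rw [h, top_le_iff, Real.volume_Ico] at this
  exact ENNReal.ofReal_ne_top this

lemma SK_sum (hb : 2 ≤ b) {x y : ℝ} (hx : x ≤ 1) (hy : y ≤ 1) (k : ℕ) :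
    SK b k x y = ∑ m ∈ Finset.range (b^k), llen b k m x * llen b k m y := by
  rw [SK, AsetD_eq_iUnion hb hx hy k]
  rw [measure_biUnion_finset ?hd ?hm]
  case hd =>
    intro m hm m' hm' hmm
    simp only [Set.disjoint_left]
    rintro p ⟨⟨hp1, _⟩, _⟩ ⟨⟨hp1', _⟩, _⟩
    have e1 := (floor_eq_nat_iff hb (k := k) m).2 hp1
    have e2 := (floor_eq_nat_iff hb (k := k) m').2 hp1'
    rw [e1] at e2
    exact hmm (by exact_mod_cast e2)
  case hm =>
    intro m hm
    exact (measurableSet_Ico.inter measurableSet_Ico).prod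
      (measurableSet_Ico.inter measurableSet_Ico)
  rw [ENNReal.toReal_sum]
  · refine Finset.sum_congr rfl fun m hm => ?_
    rw [Measure.volume_eq_prod ℝ ℝ, Measure.prod_prod, ENNReal.toReal_mul]
    rfl
  · intro m hm
    rw [Measure.volume_eq_prod ℝ ℝ, Measure.prod_prod]
    exact ENNReal.mul_ne_top (llen_ne_top b k m x) (llen_ne_top b k m y)


lemma llen_eq (hb : 2 ≤ b) {k m : ℕ} {z : ℝ} (hz0 : 0 ≤ z) :
    llen b k m z = if (m:ℤ) < ⌊(b:ℝ)^k * z⌋ then ((b:ℝ)^k)⁻¹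
      else if (m:ℤ) = ⌊(b:ℝ)^k * z⌋ then z - (m:ℝ)/(b:ℝ)^k else 0 := by
  have hB : (0:ℝ) < (b:ℝ)^k := by positivity
  rw [llen, Set.Ico_inter_Ico]
  have hmax : max ((m:ℝ)/(b:ℝ)^k) 0 = (m:ℝ)/(b:ℝ)^k := max_eq_left (by positivity)
  rw [hmax, Real.volume_Ico]
  rcases lt_trichotomy (m:ℤ) ⌊(b:ℝ)^k * z⌋ with h | h | h
  · rw [if_pos h]
    have h1 : ((m:ℝ)+1) ≤ (b:ℝ)^k * z := by
      have : ((m:ℤ):ℝ) + 1 ≤ (⌊(b:ℝ)^k * z⌋ : ℝ) := by exact_mod_cast Int.add_one_le_of_lt h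
      calc ((m:ℝ)+1) = ((m:ℤ):ℝ) + 1 := by push_cast; ring
      _ ≤ (⌊(b:ℝ)^k * z⌋ : ℝ) := this
      _ ≤ (b:ℝ)^k * z := Int.floor_le _
    have hmin : min (((m:ℝ)+1)/(b:ℝ)^k) z = ((m:ℝ)+1)/(b:ℝ)^k :=
      min_eq_left (by rw [div_le_iff₀ hB]; linarith)
    rw [hmin, ENNReal.toReal_ofReal (by rw [div_sub_div_same, add_sub_cancel_left]; positivity)]
    field_simp
    ring
  · rw [if_neg (by omega), if_pos h]
    have h1 : (m:ℝ) ≤ (b:ℝ)^k * z := by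
      calc (m:ℝ) = ((m:ℤ):ℝ) := by push_cast; ring
      _ ≤ (b:ℝ)^k * z := h ▸ Int.floor_le _
    have h2 : (b:ℝ)^k * z < (m:ℝ) + 1 := by
      have := Int.lt_floor_add_one ((b:ℝ)^k * z)
      rw [← h] at this
      push_cast at this
      linarith
    have hmin : min (((m:ℝ)+1)/(b:ℝ)^k) z = z := min_eq_right (by rw [le_div_iff₀ hB]; linarith)
    rw [hmin, ENNReal.toReal_ofReal (by rw [sub_nonneg, div_le_iff₀ hB]; linarith)]
  · rw [if_neg (by omega), if_neg (by omega)]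
    have h1 : (b:ℝ)^k * z < (m:ℝ) := by
      have : ⌊(b:ℝ)^k * z⌋ + 1 ≤ (m:ℤ) := by omega
      have h2 := Int.lt_floor_add_one ((b:ℝ)^k * z)
      calc (b:ℝ)^k * z < (⌊(b:ℝ)^k * z⌋:ℝ) + 1 := h2
      _ ≤ (m:ℝ) := by exact_mod_cast this
    have : min (((m:ℝ)+1)/(b:ℝ)^k) z - (m:ℝ)/(b:ℝ)^k < 0 := by
      have : z < (m:ℝ)/(b:ℝ)^k := by rw [lt_div_iff₀ hB]; linarith
      have := min_le_right (((m:ℝ)+1)/(b:ℝ)^k) z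
      linarith
    rw [ENNReal.ofReal_eq_zero.2 (le_of_lt this)]
    simp

lemma sum_step {M A : ℕ} (hA : A < M) (c1 c2 : ℝ) :
    ∑ m ∈ Finset.range M, (if m < A then c1 else if m = A then c2 else 0) = A * c1 + c2 := by
  induction M with
  | zero => omega
  | succ M ih =>
    rw [Finset.sum_range_succ]
    rcases Nat.lt_or_ge A M with h | h
    · rw [ih h, if_neg (by omega), if_neg (by omega), add_zero]
    · have hAM : A = M := by omega
      subst hAM
      rw [if_neg (by omega), if_pos rfl]
      congr 1
      rw [Finset.sum_congr rfl (fun m hm => ?_), Finset.sum_const, Finset.card_range,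
        nsmul_eq_mul]
      rw [if_pos (Finset.mem_range.1 hm)]

lemma floor_nonneg_unit {k : ℕ} {z : ℝ} (hz : 0 ≤ z) : 0 ≤ ⌊(b:ℝ)^k * z⌋ :=
  Int.floor_nonneg.2 (by positivity)

lemma floor_le_pow (hb : 2 ≤ b) {k : ℕ} {z : ℝ} (hz : z ≤ 1) (hz0 : 0 ≤ z) :
    ⌊(b:ℝ)^k * z⌋ ≤ ((b^k : ℕ) : ℤ) := by
  have hB : (0:ℝ) < (b:ℝ)^k := by positivity
  have h1 : (b:ℝ)^k * z ≤ ((b^k:ℕ):ℝ) := by push_cast; nlinarith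
  have h2 : ⌊((b^k:ℕ):ℝ)⌋ = ((b^k:ℕ):ℤ) := Int.floor_natCast _
  exact h2 ▸ Int.floor_le_floor h1

lemma SK_eq (hb : 2 ≤ b) {k : ℕ} {x y : ℝ} (hx : x ∈ Set.Icc (0:ℝ) 1)
    (hy : y ∈ Set.Icc (0:ℝ) 1) (hxy : x ≤ y) :
    SK b k x y = x/(b:ℝ)^k + (if ⌊(b:ℝ)^k * x⌋ = ⌊(b:ℝ)^k * y⌋ then
      (x - (⌊(b:ℝ)^k * x⌋:ℝ)/(b:ℝ)^k) * ((y - (⌊(b:ℝ)^k * y⌋:ℝ)/(b:ℝ)^k) - ((b:ℝ)^k)⁻¹)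
      else 0) := by
  have hB : (0:ℝ) < (b:ℝ)^k := by positivity
  obtain ⟨hx0, hx1⟩ := hx
  obtain ⟨hy0, hy1⟩ := hy
  set A : ℤ := ⌊(b:ℝ)^k * x⌋ with hA
  set C : ℤ := ⌊(b:ℝ)^k * y⌋ with hC
  have hA0 : 0 ≤ A := floor_nonneg_unit hx0
  have hC0 : 0 ≤ C := floor_nonneg_unit hy0
  have hAC : A ≤ C := Int.floor_le_floor (by nlinarith)
  have hAbk : A ≤ ((b^k:ℕ):ℤ) := floor_le_pow hb hx1 hx0
  have hCbk : C ≤ ((b^k:ℕ):ℤ) := floor_le_pow hb hy1 hy0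
  have hAfl : (A:ℝ) ≤ (b:ℝ)^k * x := Int.floor_le _
  have hCfl : (C:ℝ) ≤ (b:ℝ)^k * y := Int.floor_le _
  have hAfl2 : (b:ℝ)^k * x < (A:ℝ) + 1 := Int.lt_floor_add_one _
  have hCfl2 : (b:ℝ)^k * y < (C:ℝ) + 1 := Int.lt_floor_add_one _
  rw [SK_sum hb hx1 hy1 k]
  rcases eq_or_lt_of_le hAbk with hedge | hAlt
  -- edge case x = 1 (A = b^k)
  · have hx1' : x = 1 := by
      by_contra hne
      have : (b:ℝ)^k * x < (b:ℝ)^k := by nlinarith [lt_of_le_of_ne hx1 hne]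
      have : A < ((b^k:ℕ):ℤ) := by
        rw [hA, Int.floor_lt]
        push_cast
        linarith
      omega
    have hy1' : y = 1 := le_antisymm hy1 (le_trans (le_of_eq hx1'.symm) hxy)
    subst hx1'
    have hCedge : C = ((b^k:ℕ):ℤ) := by
      rw [hC, hy1', mul_one]
      rw [show ((b^k:ℕ):ℤ) = ((b^k:ℕ):ℤ) from rfl]
      have : ((b:ℝ))^k = (((b^k:ℕ):ℤ):ℝ) := by push_cast; ring
      rw [this, Int.floor_intCast]
    have hAeq : A = ((b^k:ℕ):ℤ) := hedge
    rw [if_pos (by omega)]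
    have hsum : ∀ m ∈ Finset.range (b^k), llen b k m 1 * llen b k m y = ((b:ℝ)^k)⁻¹ * ((b:ℝ)^k)⁻¹ := by
      intro m hm
      have hmr := Finset.mem_range.1 hm
      have hmA : (m:ℤ) < A := by omega
      have hmC : (m:ℤ) < C := by omega
      rw [llen_eq hb (by norm_num), llen_eq hb hy0, if_pos (by rw [← hA]; exact hmA),
        if_pos (by rw [← hC]; exact hmC)]
    rw [Finset.sum_congr rfl hsum, Finset.sum_const, Finset.card_range, nsmul_eq_mul]
    have h1 : (1:ℝ) - (A:ℝ)/(b:ℝ)^k = 0 := by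
      rw [hAeq]
      push_cast
      field_simp
      ring
    rw [hy1']
    have h2 : (1:ℝ) - (C:ℝ)/(b:ℝ)^k = 0 := by
      rw [hCedge]
      push_cast
      field_simp
      ring
    rw [h1, h2]
    push_cast
    field_simp
    ring
  -- main case A < b^k
  · have hAnat : A.toNat < b^k := by omega
    have hAr : ((A.toNat:ℕ):ℝ) = (A:ℝ) := by
      have := Int.toNat_of_nonneg hA0
      exact_mod_cast congrArg (Int.cast : ℤ → ℝ) this
    have hsum : ∀ m ∈ Finset.range (b^k), llen b k m x * llen b k m y =
        (if m < A.toNat then ((b:ℝ)^k)⁻¹ * ((b:ℝ)^k)⁻¹ else if m = A.toNat then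
          (x - (A:ℝ)/(b:ℝ)^k) * (if A = C then (y - (C:ℝ)/(b:ℝ)^k) else ((b:ℝ)^k)⁻¹) else 0) := by
      intro m hm
      rw [llen_eq hb hx0, llen_eq hb hy0]
      rcases Nat.lt_trichotomy m A.toNat with h | h | h
      · rw [if_pos (by omega : (m:ℤ) < ⌊(b:ℝ)^k * x⌋), if_pos (by omega : (m:ℤ) < ⌊(b:ℝ)^k * y⌋),
          if_pos h]
      · have hmA : (m:ℤ) = A := by omega
        have hmr : (m:ℝ) = (A:ℝ) := by exact_mod_cast hmA
        rw [if_neg (by omega : ¬ (m:ℤ) < ⌊(b:ℝ)^k * x⌋),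
          if_pos (by omega : (m:ℤ) = ⌊(b:ℝ)^k * x⌋),
          if_neg (by omega : ¬ m < A.toNat), if_pos h]
        rcases eq_or_ne A C with hACeq | hACne
        · rw [if_pos hACeq, if_neg (by omega : ¬ (m:ℤ) < ⌊(b:ℝ)^k * y⌋),
            if_pos (by omega : (m:ℤ) = ⌊(b:ℝ)^k * y⌋), hmr, ← hACeq]
        · have hAC' : A < C := by omega
          rw [if_neg hACne, if_pos (by omega : (m:ℤ) < ⌊(b:ℝ)^k * y⌋), hmr]
      · rw [if_neg (by omega : ¬ (m:ℤ) < ⌊(b:ℝ)^k * x⌋),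
          if_neg (by omega : ¬ (m:ℤ) = ⌊(b:ℝ)^k * x⌋), zero_mul]
        rw [if_neg (by omega : ¬ m < A.toNat), if_neg (by omega : ¬ m = A.toNat)]
    rw [Finset.sum_congr rfl hsum, sum_step hAnat]
    rcases eq_or_ne A C with hACeq | hACne
    · rw [if_pos hACeq, if_pos hACeq, hAr, ← hACeq]
      field_simp
      ring
    · rw [if_neg hACne, if_neg hACne, hAr]
      field_simp
      ring


noncomputable def fracD (b k : ℕ) (z : ℝ) : ℝ := z - (⌊(b:ℝ)^k * z⌋:ℝ)/(b:ℝ)^k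

lemma fracD_nonneg {k : ℕ} {z : ℝ} (hb : 2 ≤ b) (hz : 0 ≤ z) : 0 ≤ fracD b k z := by
  have hB : (0:ℝ) < (b:ℝ)^k := by positivity
  rw [fracD, sub_nonneg, div_le_iff₀ hB]
  calc ((⌊(b:ℝ)^k * z⌋:ℝ)) ≤ (b:ℝ)^k * z := Int.floor_le _
  _ = z * (b:ℝ)^k := by ring

lemma fracD_lt (hb : 2 ≤ b) {k : ℕ} (z : ℝ) : fracD b k z < ((b:ℝ)^k)⁻¹ := by
  have hB : (0:ℝ) < (b:ℝ)^k := by positivity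
  rw [fracD, sub_lt_iff_lt_add]
  rw [show ((b:ℝ)^k)⁻¹ + (⌊(b:ℝ)^k * z⌋:ℝ)/(b:ℝ)^k = ((⌊(b:ℝ)^k * z⌋:ℝ) + 1)/(b:ℝ)^k by ring,
    lt_div_iff₀ hB]
  calc z * (b:ℝ)^k = (b:ℝ)^k * z := by ring
  _ < (⌊(b:ℝ)^k * z⌋:ℝ) + 1 := Int.lt_floor_add_one _

lemma floor_mul_bounds (hb : 2 ≤ b) (w : ℝ) :
    (b:ℤ)*⌊w⌋ ≤ ⌊(b:ℝ)*w⌋ ∧ ⌊(b:ℝ)*w⌋ < (b:ℤ)*⌊w⌋ + b := by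
  constructor
  · rw [Int.le_floor]
    push_cast
    nlinarith [Int.floor_le w]
  · have hb0 : (0:ℝ) < (b:ℝ) := by positivity
    rw [Int.floor_lt]
    push_cast
    nlinarith [Int.lt_floor_add_one w, hb0]

lemma pow_succ_mul (b : ℕ) (k : ℕ) (z : ℝ) : (b:ℝ)^(k+1) * z = (b:ℝ) * ((b:ℝ)^k * z) := by
  rw [pow_succ]; ring

lemma fracD_succ (hb : 2 ≤ b) (k : ℕ) (z : ℝ) :
    fracD b k z = fracD b (k+1) z +
      ((⌊(b:ℝ)^(k+1) * z⌋ - (b:ℤ)*⌊(b:ℝ)^k * z⌋ : ℤ):ℝ) * ((b:ℝ)^(k+1))⁻¹ := by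
  have hB : (0:ℝ) < (b:ℝ)^k := by positivity
  have hb0 : (0:ℝ) < (b:ℝ) := by positivity
  rw [fracD, fracD]
  have hp : (b:ℝ)^(k+1) = (b:ℝ)^k * b := pow_succ _ _
  rw [hp]
  push_cast
  field_simp
  ring

lemma GsetD_eq (hb : 2 ≤ b) {x y : ℝ} (hx : x ≤ 1) (hy : y ≤ 1) (c : ℕ) :
    GsetD b c x y = AsetD b c x y \ AsetD b (c+1) x y := by
  ext p
  simp only [GsetD, AsetD, Set.mem_setOf_eq, Set.mem_diff]
  constructor
  · rintro ⟨h1, h2, h3⟩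
    have hu : p.1 ∈ Set.Ico (0:ℝ) 1 := ⟨h1.1, lt_of_lt_of_le h1.2 hx⟩
    have hv : p.2 ∈ Set.Ico (0:ℝ) 1 := ⟨h2.1, lt_of_lt_of_le h2.2 hy⟩
    obtain ⟨g1, g2⟩ := (gammaB_eq_iff hb hu hv c).1 h3
    exact ⟨⟨h1, h2, g1⟩, fun hcontra => g2 hcontra.2.2⟩
  · rintro ⟨⟨h1, h2, h3⟩, h4⟩
    have hu : p.1 ∈ Set.Ico (0:ℝ) 1 := ⟨h1.1, lt_of_lt_of_le h1.2 hx⟩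
    have hv : p.2 ∈ Set.Ico (0:ℝ) 1 := ⟨h2.1, lt_of_lt_of_le h2.2 hy⟩
    refine ⟨h1, h2, (gammaB_eq_iff hb hu hv c).2 ⟨h3, fun hcontra => h4 ⟨h1, h2, hcontra⟩⟩⟩

lemma measurableSet_GsetD (hb : 2 ≤ b) {x y : ℝ} (hx : x ≤ 1) (hy : y ≤ 1) (c : ℕ) :
    MeasurableSet (GsetD b c x y) := by
  rw [GsetD_eq hb hx hy]
  exact (measurableSet_AsetD b c x y).diff (measurableSet_AsetD b (c+1) x y)

lemma FF_eq (hb : 2 ≤ b) {x y : ℝ} (hx : x ≤ 1) (hy : y ≤ 1) (c : ℕ) :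
    FF b c x y = SK b c x y - SK b (c+1) x y := by
  have hsub : AsetD b (c+1) x y ⊆ AsetD b c x y := by
    rintro p ⟨h1, h2, h3⟩
    exact ⟨h1, h2, agr_succ hb h3⟩
  rw [FF, GsetD_eq hb hx hy,
    measure_diff hsub (measurableSet_AsetD b (c+1) x y).nullMeasurableSet
      (volume_AsetD_ne_top hx hy (c+1)),
    ENNReal.toReal_sub_of_le (measure_mono hsub) (volume_AsetD_ne_top hx hy c)]
  rfl

lemma FF_symm (hb : 2 ≤ b) {x y : ℝ} (hx : x ≤ 1) (hy : y ≤ 1) (c : ℕ) :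
    FF b c x y = FF b c y x := by
  have hswap : Prod.swap ⁻¹' (GsetD b c x y) = GsetD b c y x := by
    ext p
    simp only [Set.mem_preimage, GsetD, Set.mem_setOf_eq, Prod.fst_swap, Prod.snd_swap]
    rw [gammaB_symm b p.2 p.1]
    tauto
  have h2 : volume (Prod.swap ⁻¹' (GsetD b c x y)) = volume (GsetD b c x y) := by
    rw [Measure.volume_eq_prod ℝ ℝ]
    exact (Measure.measurePreserving_swap (μ := volume) (ν := volume)).measure_preimage
      (by rw [← Measure.volume_eq_prod ℝ ℝ]
          exact (measurableSet_GsetD hb hx hy c).nullMeasurableSet)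
  rw [FF, FF, ← hswap, h2]

lemma ffD_nonneg (b c : ℕ) (hb : 2 ≤ b) (x y : ℝ) : 0 ≤ ffD b c x y := by
  have h1 : (1:ℝ) < (b:ℝ) := one_lt_B hb
  exact mul_nonneg (div_nonneg (by positivity) (by linarith)) ENNReal.toReal_nonneg

lemma nat_cast_consec_nonneg (g d : ℕ) : (0:ℝ) ≤ ((g:ℝ)-(d:ℝ))*((g:ℝ)-(d:ℝ)-1) := by
  rcases le_or_gt g d with h | h
  · have h1 : (g:ℝ) ≤ (d:ℝ) := by exact_mod_cast h
    nlinarith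
  · have h1 : (d:ℝ)+1 ≤ (g:ℝ) := by exact_mod_cast h
    nlinarith

lemma bbd_ge (b d : ℕ) (hb : 2 ≤ b) (hd : d < b) : (d:ℝ)+1 ≤ (b:ℝ)*((b:ℝ)-(d:ℝ)) := by
  have h1 : ((d:ℝ)) + 1 ≤ (b:ℝ) := by exact_mod_cast hd
  have h2 : (1:ℝ) ≤ (b:ℝ)-(d:ℝ) := by linarith
  nlinarith

lemma bbd_ge' (b d g : ℕ) (hb : 2 ≤ b) (hd : d < b) (hg : g < b) :
    (g:ℝ)+1 ≤ (b:ℝ)*((b:ℝ)-(d:ℝ)) := by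
  have h1 : ((g:ℝ)) + 1 ≤ (b:ℝ) := by exact_mod_cast hg
  have h1' : ((d:ℝ)) + 1 ≤ (b:ℝ) := by exact_mod_cast hd
  have h2 : (1:ℝ) ≤ (b:ℝ)-(d:ℝ) := by linarith
  nlinarith

/-- Key inequality for the boundary case. -/
lemma keyG (b d e g : ℕ) (hb : 2 ≤ b) (hd : d < b) (hg : g < b) (heg : e < g)
    {D u v : ℝ} (hD : 0 < D) (hu0 : 0 ≤ u) (hv0 : 0 ≤ v) (huD : u < D) (hvD : v < D) :
    0 ≤ (u+(e:ℝ)*D)*(v+(g:ℝ)*D) - ((d:ℝ)+1)*D*(u+(e:ℝ)*D) - (d:ℝ)*D*(v+(g:ℝ)*D)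
      + (d:ℝ)*((b:ℝ)-(d:ℝ))*(b:ℝ)*D^2 := by
  have hd0 : (0:ℝ) ≤ (d:ℝ) := Nat.cast_nonneg d
  have he0 : (0:ℝ) ≤ (e:ℝ) := Nat.cast_nonneg e
  have hg0 : (0:ℝ) ≤ (g:ℝ) := Nat.cast_nonneg g
  have heg' : (e:ℝ)+1 ≤ (g:ℝ) := by exact_mod_cast heg
  have hb2 := bbd_ge b d hb hd
  have hbg := bbd_ge' b d g hb hd hg
  have hcons := nat_cast_consec_nonneg g d
  have hα0 : (0:ℝ) ≤ u + (e:ℝ)*D := by nlinarith [mul_nonneg he0 hD.le]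
  have halg : u + (e:ℝ)*D < (g:ℝ)*D := by
    nlinarith [mul_nonneg (by linarith : (0:ℝ) ≤ (g:ℝ)-(e:ℝ)-1) hD.le]
  rcases le_or_gt ((d:ℝ)*D) (u+(e:ℝ)*D) with hα | hα
  · rcases le_or_gt ((d:ℝ)+1) (g:ℝ) with hgd | hgd
    · have hid : (u+(e:ℝ)*D)*(v+(g:ℝ)*D) - ((d:ℝ)+1)*D*(u+(e:ℝ)*D) - (d:ℝ)*D*(v+(g:ℝ)*D)
          + (d:ℝ)*((b:ℝ)-(d:ℝ))*(b:ℝ)*D^2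
          = v*((u+(e:ℝ)*D)-(d:ℝ)*D) + ((g:ℝ)-1-(d:ℝ))*D*(u+(e:ℝ)*D)
            + ((d:ℝ)*((b:ℝ)*((b:ℝ)-(d:ℝ))-(g:ℝ)))*D^2 := by ring
      rw [hid]
      have t1 : (0:ℝ) ≤ v*((u+(e:ℝ)*D)-(d:ℝ)*D) := mul_nonneg hv0 (by linarith)
      have t2 : (0:ℝ) ≤ ((g:ℝ)-1-(d:ℝ))*D*(u+(e:ℝ)*D) :=
        mul_nonneg (mul_nonneg (by linarith) hD.le) hα0
      have t3 : (0:ℝ) ≤ ((d:ℝ)*((b:ℝ)*((b:ℝ)-(d:ℝ))-(g:ℝ)))*D^2 :=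
        mul_nonneg (mul_nonneg hd0 (by linarith)) (sq_nonneg D)
      linarith
    · have hid : (u+(e:ℝ)*D)*(v+(g:ℝ)*D) - ((d:ℝ)+1)*D*(u+(e:ℝ)*D) - (d:ℝ)*D*(v+(g:ℝ)*D)
          + (d:ℝ)*((b:ℝ)-(d:ℝ))*(b:ℝ)*D^2
          = v*((u+(e:ℝ)*D)-(d:ℝ)*D) + ((d:ℝ)+1-(g:ℝ))*D*((g:ℝ)*D - (u+(e:ℝ)*D))
            + (((g:ℝ)-(d:ℝ))*((g:ℝ)-(d:ℝ)-1))*D^2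
            + ((d:ℝ)*((b:ℝ)*((b:ℝ)-(d:ℝ))-(d:ℝ)-1))*D^2 := by ring
      rw [hid]
      have t1 : (0:ℝ) ≤ v*((u+(e:ℝ)*D)-(d:ℝ)*D) := mul_nonneg hv0 (by linarith)
      have t2 : (0:ℝ) ≤ ((d:ℝ)+1-(g:ℝ))*D*((g:ℝ)*D - (u+(e:ℝ)*D)) :=
        mul_nonneg (mul_nonneg (by linarith) hD.le) (by linarith)
      have t3 : (0:ℝ) ≤ (((g:ℝ)-(d:ℝ))*((g:ℝ)-(d:ℝ)-1))*D^2 := mul_nonneg hcons (sq_nonneg D)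
      have t4 : (0:ℝ) ≤ ((d:ℝ)*((b:ℝ)*((b:ℝ)-(d:ℝ))-(d:ℝ)-1))*D^2 :=
        mul_nonneg (mul_nonneg hd0 (by linarith)) (sq_nonneg D)
      linarith
  · rcases le_or_gt (d:ℝ) (g:ℝ) with hgd | hgd
    · have hid : (u+(e:ℝ)*D)*(v+(g:ℝ)*D) - ((d:ℝ)+1)*D*(u+(e:ℝ)*D) - (d:ℝ)*D*(v+(g:ℝ)*D)
          + (d:ℝ)*((b:ℝ)-(d:ℝ))*(b:ℝ)*D^2
          = (D-v)*((d:ℝ)*D-(u+(e:ℝ)*D)) + ((g:ℝ)-(d:ℝ))*D*(u+(e:ℝ)*D)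
            + ((d:ℝ)*((b:ℝ)*((b:ℝ)-(d:ℝ))-(g:ℝ)-1))*D^2 := by ring
      rw [hid]
      have t1 : (0:ℝ) ≤ (D-v)*((d:ℝ)*D-(u+(e:ℝ)*D)) :=
        mul_nonneg (by linarith) (by linarith)
      have t2 : (0:ℝ) ≤ ((g:ℝ)-(d:ℝ))*D*(u+(e:ℝ)*D) :=
        mul_nonneg (mul_nonneg (by linarith) hD.le) hα0
      have t3 : (0:ℝ) ≤ ((d:ℝ)*((b:ℝ)*((b:ℝ)-(d:ℝ))-(g:ℝ)-1))*D^2 :=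
        mul_nonneg (mul_nonneg hd0 (by linarith)) (sq_nonneg D)
      linarith
    · have hid : (u+(e:ℝ)*D)*(v+(g:ℝ)*D) - ((d:ℝ)+1)*D*(u+(e:ℝ)*D) - (d:ℝ)*D*(v+(g:ℝ)*D)
          + (d:ℝ)*((b:ℝ)-(d:ℝ))*(b:ℝ)*D^2
          = (D-v)*((d:ℝ)*D-(u+(e:ℝ)*D)) + ((d:ℝ)-(g:ℝ))*D*((d:ℝ)*D-(u+(e:ℝ)*D))
            + ((d:ℝ)*((b:ℝ)*((b:ℝ)-(d:ℝ))-(d:ℝ)-1))*D^2 := by ring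
      rw [hid]
      have t1 : (0:ℝ) ≤ (D-v)*((d:ℝ)*D-(u+(e:ℝ)*D)) :=
        mul_nonneg (by linarith) (by linarith)
      have t2 : (0:ℝ) ≤ ((d:ℝ)-(g:ℝ))*D*((d:ℝ)*D-(u+(e:ℝ)*D)) :=
        mul_nonneg (mul_nonneg (by linarith) hD.le) (by linarith)
      have t3 : (0:ℝ) ≤ ((d:ℝ)*((b:ℝ)*((b:ℝ)-(d:ℝ))-(d:ℝ)-1))*D^2 :=
        mul_nonneg (mul_nonneg hd0 (by linarith)) (sq_nonneg D)
      linarith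

/-- Key inequality for the interior case. -/
lemma keyG2 (b d d' : ℕ) (hb : 2 ≤ b) (hd : d < b)
    {D u v : ℝ} (hD : 0 < D) (hu0 : 0 ≤ u) (hv0 : 0 ≤ v) (huD : u < D) (hvD : v < D) :
    0 ≤ ((d':ℝ)-(d:ℝ))*(u+v)*D +
      ((d':ℝ)^2-(d':ℝ)-2*(d:ℝ)*(d':ℝ)+(b:ℝ)*(d:ℝ)*((b:ℝ)-(d:ℝ)))*D^2 := by
  have hd0 : (0:ℝ) ≤ (d:ℝ) := Nat.cast_nonneg d
  have hd0' : (0:ℝ) ≤ (d':ℝ) := Nat.cast_nonneg d'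
  have hb2 := bbd_ge b d hb hd
  have hcons := nat_cast_consec_nonneg d' d
  have hcons2 := nat_cast_consec_nonneg d d'
  rcases le_or_gt (d:ℝ) (d':ℝ) with h | h
  · have hid : ((d':ℝ)-(d:ℝ))*(u+v)*D +
        ((d':ℝ)^2-(d':ℝ)-2*(d:ℝ)*(d':ℝ)+(b:ℝ)*(d:ℝ)*((b:ℝ)-(d:ℝ)))*D^2
        = (((d':ℝ)-(d:ℝ))*(u+v))*D + (((d':ℝ)-(d:ℝ))*((d':ℝ)-(d:ℝ)-1))*D^2
          + ((d:ℝ)*((b:ℝ)*((b:ℝ)-(d:ℝ))-(d:ℝ)-1))*D^2 := by ring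
    rw [hid]
    have t1 : (0:ℝ) ≤ (((d':ℝ)-(d:ℝ))*(u+v))*D :=
      mul_nonneg (mul_nonneg (by linarith) (by linarith)) hD.le
    have t2 : (0:ℝ) ≤ (((d':ℝ)-(d:ℝ))*((d':ℝ)-(d:ℝ)-1))*D^2 := mul_nonneg hcons (sq_nonneg D)
    have t3 : (0:ℝ) ≤ ((d:ℝ)*((b:ℝ)*((b:ℝ)-(d:ℝ))-(d:ℝ)-1))*D^2 :=
      mul_nonneg (mul_nonneg hd0 (by linarith)) (sq_nonneg D)
    linarith
  · have hid : ((d':ℝ)-(d:ℝ))*(u+v)*D +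
        ((d':ℝ)^2-(d':ℝ)-2*(d:ℝ)*(d':ℝ)+(b:ℝ)*(d:ℝ)*((b:ℝ)-(d:ℝ)))*D^2
        = (((d:ℝ)-(d':ℝ))*(2*D-(u+v)))*D + (((d:ℝ)-(d':ℝ))*((d:ℝ)-(d':ℝ)-1))*D^2
          + ((d:ℝ)*((b:ℝ)*((b:ℝ)-(d:ℝ))-(d:ℝ)-1))*D^2 := by ring
    rw [hid]
    have t1 : (0:ℝ) ≤ (((d:ℝ)-(d':ℝ))*(2*D-(u+v)))*D :=
      mul_nonneg (mul_nonneg (by linarith) (by linarith)) hD.le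
    have t2 : (0:ℝ) ≤ (((d:ℝ)-(d':ℝ))*((d:ℝ)-(d':ℝ)-1))*D^2 := mul_nonneg hcons2 (sq_nonneg D)
    have t3 : (0:ℝ) ≤ ((d:ℝ)*((b:ℝ)*((b:ℝ)-(d:ℝ))-(d:ℝ)-1))*D^2 :=
      mul_nonneg (mul_nonneg hd0 (by linarith)) (sq_nonneg D)
    linarith


/-- Pure algebra: the tail case. -/
lemma tail_step {bR K K1 K2 x E0 : ℝ} (hb : 1 < bR) (hK : 0 < K)
    (hK1 : K1 = K*bR) (hK2 : K2 = K1*bR) (hE0 : E0 ≤ 0) :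
    K1/(bR-1) * ((x/K + E0) - x/K1) ≤ K2/(bR-1) * (x/K1 - x/K2) := by
  subst hK1 hK2
  have hKne : K ≠ 0 := ne_of_gt hK
  have hbne : bR ≠ 0 := by linarith
  have hb1 : (0:ℝ) < bR - 1 := by linarith
  have e1 : (K*bR)/(bR-1) * (x/K - x/(K*bR)) = x := by field_simp
  have e2 : (K*bR*bR)/(bR-1) * (x/(K*bR) - x/(K*bR*bR)) = x := by field_simp
  have hco : (K*bR)/(bR-1) * E0 ≤ 0 :=
    mul_nonpos_iff.2 (Or.inl ⟨by positivity, hE0⟩)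
  have hdist : (K*bR)/(bR-1) * ((x/K + E0) - x/(K*bR)) =
      (K*bR)/(bR-1) * (x/K - x/(K*bR)) + (K*bR)/(bR-1) * E0 := by ring
  linarith

/-- Pure algebra: the interior case. -/
lemma interior_step {bR K K1 K2 x α0 β0 α1 β1 α2 β2 dR eR : ℝ} (hb : 1 < bR) (hK : 0 < K)
    (hK1 : K1 = K*bR) (hK2 : K2 = K1*bR)
    (hα0 : α0 = α1 + dR*K1⁻¹) (hβ0 : β0 = β1 + dR*K1⁻¹)
    (hα1 : α1 = α2 + eR*K2⁻¹) (hβ1 : β1 = β2 + eR*K2⁻¹)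
    (hG2 : 0 ≤ (eR-dR)*(α2+β2)*K2⁻¹ + (eR^2-eR-2*dR*eR+bR*dR*(bR-dR))*(K2⁻¹)^2) :
    K1/(bR-1) * ((x/K + α0*(β0 - K⁻¹)) - (x/K1 + α1*(β1 - K1⁻¹))) ≤
      K2/(bR-1) * ((x/K1 + α1*(β1 - K1⁻¹)) - (x/K2 + α2*(β2 - K2⁻¹))) := by
  subst hK1 hK2 hα0 hβ0 hα1 hβ1
  have hKne : K ≠ 0 := ne_of_gt hK
  have hbne : bR ≠ 0 := by linarith
  have hb1 : (0:ℝ) < bR - 1 := by linarith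
  have hco : 0 ≤ (K*bR)/(bR-1) * (bR * ((eR-dR)*(α2+β2)*(K*bR*bR)⁻¹ +
      (eR^2-eR-2*dR*eR+bR*dR*(bR-dR))*((K*bR*bR)⁻¹)^2)) :=
    mul_nonneg (by positivity) (mul_nonneg (by linarith) hG2)
  have hid : (K*bR*bR)/(bR-1) * ((x/(K*bR) + (α2 + eR*(K*bR*bR)⁻¹)*((β2 + eR*(K*bR*bR)⁻¹) - (K*bR)⁻¹))
        - (x/(K*bR*bR) + α2*(β2 - (K*bR*bR)⁻¹))) -
      (K*bR)/(bR-1) * ((x/K + ((α2 + eR*(K*bR*bR)⁻¹) + dR*(K*bR)⁻¹)*(((β2 + eR*(K*bR*bR)⁻¹) + dR*(K*bR)⁻¹) - K⁻¹))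
        - (x/(K*bR) + (α2 + eR*(K*bR*bR)⁻¹)*((β2 + eR*(K*bR*bR)⁻¹) - (K*bR)⁻¹))) =
      (K*bR)/(bR-1) * (bR * ((eR-dR)*(α2+β2)*(K*bR*bR)⁻¹ +
        (eR^2-eR-2*dR*eR+bR*dR*(bR-dR))*((K*bR*bR)⁻¹)^2)) := by
    field_simp
    ring
  linarith

/-- Pure algebra: the boundary case. -/
lemma boundary_step {bR K K1 K2 x α0 β0 α1 β1 u v dR eR gR : ℝ} (hb : 1 < bR) (hK : 0 < K)
    (hK1 : K1 = K*bR) (hK2 : K2 = K1*bR)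
    (hα0 : α0 = α1 + dR*K1⁻¹) (hβ0 : β0 = β1 + dR*K1⁻¹)
    (hα1 : α1 = u + eR*K2⁻¹) (hβ1 : β1 = v + gR*K2⁻¹)
    (hG : 0 ≤ (u+eR*K2⁻¹)*(v+gR*K2⁻¹) - (dR+1)*K2⁻¹*(u+eR*K2⁻¹) - dR*K2⁻¹*(v+gR*K2⁻¹)
      + dR*(bR-dR)*bR*(K2⁻¹)^2) :
    K1/(bR-1) * ((x/K + α0*(β0 - K⁻¹)) - (x/K1 + α1*(β1 - K1⁻¹))) ≤
      K2/(bR-1) * ((x/K1 + α1*(β1 - K1⁻¹)) - x/K2) := by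
  subst hK1 hK2 hα0 hβ0 hα1 hβ1
  have hKne : K ≠ 0 := ne_of_gt hK
  have hbne : bR ≠ 0 := by linarith
  have hb1 : (0:ℝ) < bR - 1 := by linarith
  have hco : 0 ≤ (K*bR)/(bR-1) * (bR * ((u+eR*(K*bR*bR)⁻¹)*(v+gR*(K*bR*bR)⁻¹)
      - (dR+1)*(K*bR*bR)⁻¹*(u+eR*(K*bR*bR)⁻¹) - dR*(K*bR*bR)⁻¹*(v+gR*(K*bR*bR)⁻¹)
      + dR*(bR-dR)*bR*((K*bR*bR)⁻¹)^2)) :=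
    mul_nonneg (by positivity) (mul_nonneg (by linarith) hG)
  have hid : (K*bR*bR)/(bR-1) * ((x/(K*bR) + ((u+eR*(K*bR*bR)⁻¹))*(((v+gR*(K*bR*bR)⁻¹)) - (K*bR)⁻¹))
        - x/(K*bR*bR)) -
      (K*bR)/(bR-1) * ((x/K + (((u+eR*(K*bR*bR)⁻¹)) + dR*(K*bR)⁻¹)*((((v+gR*(K*bR*bR)⁻¹)) + dR*(K*bR)⁻¹) - K⁻¹))
        - (x/(K*bR) + ((u+eR*(K*bR*bR)⁻¹))*(((v+gR*(K*bR*bR)⁻¹)) - (K*bR)⁻¹))) =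
      (K*bR)/(bR-1) * (bR * ((u+eR*(K*bR*bR)⁻¹)*(v+gR*(K*bR*bR)⁻¹)
      - (dR+1)*(K*bR*bR)⁻¹*(u+eR*(K*bR*bR)⁻¹) - dR*(K*bR*bR)⁻¹*(v+gR*(K*bR*bR)⁻¹)
      + dR*(bR-dR)*bR*((K*bR*bR)⁻¹)^2)) := by
    field_simp
    ring
  linarith

lemma ffD_mono_le (hb : 2 ≤ b) {x y : ℝ} (hx : x ∈ Set.Icc (0:ℝ) 1) (hy : y ∈ Set.Icc (0:ℝ) 1)
    (hxy : x ≤ y) (c : ℕ) : ffD b c x y ≤ ffD b (c+1) x y := by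
  have hB1 : (1:ℝ) < (b:ℝ) := one_lt_B hb
  have hbR : (0:ℝ) < (b:ℝ) := by linarith
  have hKc : (0:ℝ) < (b:ℝ)^c := by positivity
  have p1 : (b:ℝ)^(1+c) = (b:ℝ)^c*(b:ℝ) := by rw [add_comm]; exact pow_succ _ _
  have p2 : (b:ℝ)^(c+1) = (b:ℝ)^c*(b:ℝ) := pow_succ _ _
  have p3 : (b:ℝ)^(c+1+1) = (b:ℝ)^c*(b:ℝ)*(b:ℝ) := by rw [pow_succ, pow_succ]
  have p4 : (b:ℝ)^(1+(c+1)) = (b:ℝ)^c*(b:ℝ)*(b:ℝ) := by rw [add_comm, pow_succ, pow_succ]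
  rw [ffD, ffD, FF_eq hb hx.2 hy.2, FF_eq hb hx.2 hy.2,
    SK_eq hb hx hy hxy (k := c), SK_eq hb hx hy hxy (k := c+1), SK_eq hb hx hy hxy (k := c+1+1)]
  by_cases h1 : ⌊(b:ℝ)^(c+1)*x⌋ = ⌊(b:ℝ)^(c+1)*y⌋
  · have h0 : ⌊(b:ℝ)^c*x⌋ = ⌊(b:ℝ)^c*y⌋ := agr_succ hb h1
    rw [if_pos h0, if_pos h1]
    have h0m : (b:ℤ)*⌊(b:ℝ)^c*x⌋ = (b:ℤ)*⌊(b:ℝ)^c*y⌋ := by rw [h0]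
    have h1m : (b:ℤ)*⌊(b:ℝ)^(c+1)*x⌋ = (b:ℤ)*⌊(b:ℝ)^(c+1)*y⌋ := by rw [h1]
    -- digit at level c
    have hdx := floor_mul_bounds hb ((b:ℝ)^c * x)
    rw [← pow_succ_mul] at hdx
    have hdy := floor_mul_bounds hb ((b:ℝ)^c * y)
    rw [← pow_succ_mul] at hdy
    set dI : ℤ := ⌊(b:ℝ)^(c+1)*x⌋ - b*⌊(b:ℝ)^c*x⌋ with hdI
    have hdI0 : 0 ≤ dI := by omega
    have hdIb : dI < b := by omega
    have hdNb : dI.toNat < b := by omega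
    have hdNr : ((dI.toNat : ℕ):ℝ) = (dI:ℝ) := by exact_mod_cast Int.toNat_of_nonneg hdI0
    have hfx : fracD b c x = fracD b (c+1) x + (dI:ℝ)*((b:ℝ)^(c+1))⁻¹ := by
      have h := fracD_succ hb c x
      rw [← hdI] at h
      exact h
    have hfy : fracD b c y = fracD b (c+1) y + (dI:ℝ)*((b:ℝ)^(c+1))⁻¹ := by
      have h := fracD_succ hb c y
      have hdyI : ⌊(b:ℝ)^(c+1)*y⌋ - (b:ℤ)*⌊(b:ℝ)^c*y⌋ = dI := by omega
      rw [hdyI] at h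
      exact h
    simp only [fracD] at hfx hfy
    rw [p2] at hfx hfy
    by_cases h2 : ⌊(b:ℝ)^(c+1+1)*x⌋ = ⌊(b:ℝ)^(c+1+1)*y⌋
    · -- interior case
      rw [if_pos h2]
      have hdx2 := floor_mul_bounds hb ((b:ℝ)^(c+1) * x)
      rw [← pow_succ_mul] at hdx2
      have hdy2 := floor_mul_bounds hb ((b:ℝ)^(c+1) * y)
      rw [← pow_succ_mul] at hdy2
      set eI : ℤ := ⌊(b:ℝ)^(c+1+1)*x⌋ - b*⌊(b:ℝ)^(c+1)*x⌋ with heI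
      have heI0 : 0 ≤ eI := by omega
      have heIb : eI < b := by omega
      have heNb : eI.toNat < b := by omega
      have heNr : ((eI.toNat : ℕ):ℝ) = (eI:ℝ) := by exact_mod_cast Int.toNat_of_nonneg heI0
      have hgx : fracD b (c+1) x = fracD b (c+1+1) x + (eI:ℝ)*((b:ℝ)^(c+1+1))⁻¹ := by
        have h := fracD_succ hb (c+1) x
        rw [← heI] at h
        exact h
      have hgy : fracD b (c+1) y = fracD b (c+1+1) y + (eI:ℝ)*((b:ℝ)^(c+1+1))⁻¹ := by
        have h := fracD_succ hb (c+1) y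
        have heyI : ⌊(b:ℝ)^(c+1+1)*y⌋ - (b:ℤ)*⌊(b:ℝ)^(c+1)*y⌋ = eI := by omega
        rw [heyI] at h
        exact h
      have hG2 := keyG2 b dI.toNat eI.toNat hb hdNb (D := ((b:ℝ)^(c+1+1))⁻¹)
        (by positivity) (fracD_nonneg hb hx.1) (fracD_nonneg hb hy.1)
        (fracD_lt hb x) (fracD_lt hb y)
      rw [heNr, hdNr] at hG2
      simp only [fracD] at hgx hgy hG2
      rw [p3] at hgx hgy hG2
      rw [p1, p2, p3, p4]
      exact interior_step hB1 hKc rfl rfl hfx hfy hgx hgy hG2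
    · -- boundary case
      rw [if_neg h2]
      have hdx2 := floor_mul_bounds hb ((b:ℝ)^(c+1) * x)
      rw [← pow_succ_mul] at hdx2
      have hdy2 := floor_mul_bounds hb ((b:ℝ)^(c+1) * y)
      rw [← pow_succ_mul] at hdy2
      set eI : ℤ := ⌊(b:ℝ)^(c+1+1)*x⌋ - b*⌊(b:ℝ)^(c+1)*x⌋ with heI
      set gI : ℤ := ⌊(b:ℝ)^(c+1+1)*y⌋ - b*⌊(b:ℝ)^(c+1)*y⌋ with hgI
      have heI0 : 0 ≤ eI := by omega
      have heIb : eI < b := by omega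
      have hgI0 : 0 ≤ gI := by omega
      have hgIb : gI < b := by omega
      have hfloorle : ⌊(b:ℝ)^(c+1+1)*x⌋ ≤ ⌊(b:ℝ)^(c+1+1)*y⌋ := by
        apply Int.floor_le_floor
        have : (0:ℝ) ≤ (b:ℝ)^(c+1+1) := by positivity
        nlinarith
      have hegI : eI < gI := by
        rcases lt_or_eq_of_le hfloorle with h | h
        · omega
        · exfalso; exact h2 h
      have heNb : eI.toNat < b := by omega
      have hgNb : gI.toNat < b := by omega
      have hegN : eI.toNat < gI.toNat := by omega
      have heNr : ((eI.toNat : ℕ):ℝ) = (eI:ℝ) := by exact_mod_cast Int.toNat_of_nonneg heI0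
      have hgNr : ((gI.toNat : ℕ):ℝ) = (gI:ℝ) := by exact_mod_cast Int.toNat_of_nonneg hgI0
      have hgx : fracD b (c+1) x = fracD b (c+1+1) x + (eI:ℝ)*((b:ℝ)^(c+1+1))⁻¹ := by
        have h := fracD_succ hb (c+1) x
        rw [← heI] at h
        exact h
      have hgy : fracD b (c+1) y = fracD b (c+1+1) y + (gI:ℝ)*((b:ℝ)^(c+1+1))⁻¹ := by
        have h := fracD_succ hb (c+1) y
        rw [← hgI] at h
        exact h
      have hG := keyG b dI.toNat eI.toNat gI.toNat hb hdNb hgNb hegN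
        (D := ((b:ℝ)^(c+1+1))⁻¹) (by positivity)
        (fracD_nonneg hb hx.1) (fracD_nonneg hb hy.1) (fracD_lt hb x) (fracD_lt hb y)
      rw [heNr, hdNr, hgNr] at hG
      simp only [fracD] at hgx hgy hG
      rw [p3] at hgx hgy hG
      simp only [add_zero]
      rw [p1, p2, p3, p4]
      exact boundary_step hB1 hKc rfl rfl hfx hfy hgx hgy hG
  · have h2 : ¬ (⌊(b:ℝ)^(c+1+1)*x⌋ = ⌊(b:ℝ)^(c+1+1)*y⌋) := fun hh => h1 (agr_succ hb hh)
    rw [if_neg h1, if_neg h2]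
    have hE0 : (if ⌊(b:ℝ)^c*x⌋ = ⌊(b:ℝ)^c*y⌋ then
        (x - (⌊(b:ℝ)^c*x⌋:ℝ)/(b:ℝ)^c) * ((y - (⌊(b:ℝ)^c*y⌋:ℝ)/(b:ℝ)^c) - ((b:ℝ)^c)⁻¹) else 0)
        ≤ 0 := by
      split
      · refine mul_nonpos_iff.2 (Or.inl ⟨?_, ?_⟩)
        · have h := fracD_nonneg hb hx.1 (b := b) (k := c)
          simpa [fracD] using h
        · have h := fracD_lt hb (b := b) (k := c) y
          simp only [fracD] at h
          linarith
      · exact le_refl _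
    simp only [add_zero]
    rw [p1, p2, p3, p4]
    exact tail_step hB1 hKc rfl rfl hE0

lemma ffD_mono (hb : 2 ≤ b) {x y : ℝ} (hx : x ∈ Set.Icc (0:ℝ) 1) (hy : y ∈ Set.Icc (0:ℝ) 1)
    (c : ℕ) : ffD b c x y ≤ ffD b (c+1) x y := by
  rcases le_total x y with h | h
  · exact ffD_mono_le hb hx hy h c
  · rw [ffD, ffD, FF_symm hb hx.2 hy.2 c, FF_symm hb hx.2 hy.2 (c+1)]
    exact ffD_mono_le hb hy hx h c

lemma ffD_diag (hb : 2 ≤ b) (k c : ℕ) :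
    ffD b c (((b:ℝ)^k)⁻¹) (((b:ℝ)^k)⁻¹) = if k ≤ c then ((b:ℝ)^k)⁻¹ else 0 := by
  have hB1 : (1:ℝ) < (b:ℝ) := one_lt_B hb
  have hBk : (0:ℝ) < (b:ℝ)^k := by positivity
  set z := ((b:ℝ)^k)⁻¹ with hz
  have hz0 : 0 ≤ z := by positivity
  have hz1 : z ≤ 1 := by
    have h1 : (1:ℝ) ≤ (b:ℝ)^k := one_le_pow₀ (by linarith)
    rw [hz]
    exact inv_le_one_of_one_le₀ h1
  have hmem : z ∈ Set.Icc (0:ℝ) 1 := ⟨hz0, hz1⟩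
  have hfloor : ∀ j : ℕ, ⌊(b:ℝ)^j * z⌋ = if j < k then 0 else ((b^(j-k) : ℕ) : ℤ) := by
    intro j
    split
    · next hj =>
      rw [Int.floor_eq_zero_iff]
      constructor
      · positivity
      · rw [hz]
        have h2 : (b:ℝ)^j < (b:ℝ)^k := pow_lt_pow_right₀ hB1 hj
        rw [mul_inv_lt_iff₀ hBk, one_mul]
        exact h2
    · next hj =>
      push_neg at hj
      have h3 : (b:ℝ)^(j-k) * (b:ℝ)^k = (b:ℝ)^j := by rw [← pow_add]; congr 1; omega
      have h4 : (b:ℝ)^j * z = ((b^(j-k):ℕ):ℝ) := by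
        rw [hz]
        push_cast
        field_simp
        linarith [h3]
      rw [h4, Int.floor_natCast]
  have hSK : ∀ j : ℕ, SK b j z z = if j < k then z*z else z/(b:ℝ)^j := by
    intro j
    have hBj : (0:ℝ) < (b:ℝ)^j := by positivity
    rw [SK_eq hb hmem hmem (le_refl z), if_pos rfl, hfloor j]
    split
    · next hj =>
      simp only [Int.cast_zero, zero_div, sub_zero]
      field_simp
      ring
    · next hj =>
      have hcast : (((b^(j-k):ℕ):ℤ):ℝ)/(b:ℝ)^j = z := by
        push_cast
        rw [hz]
        have h3 : (b:ℝ)^(j-k) * (b:ℝ)^k = (b:ℝ)^j := by rw [← pow_add]; congr 1; omega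
        field_simp
        linarith [h3]
      rw [hcast, sub_self, zero_mul, add_zero]
  rw [ffD, FF_eq hb hz1 hz1, hSK c, hSK (c+1)]
  have hbne : (b:ℝ) ≠ 0 := by linarith
  have hb1ne : (b:ℝ) - 1 ≠ 0 := by linarith
  by_cases hkc : k ≤ c
  · rw [if_pos hkc, if_neg (by omega), if_neg (by omega)]
    have p2 : (b:ℝ)^(c+1) = (b:ℝ)^c*(b:ℝ) := pow_succ _ _
    have p1 : (b:ℝ)^(1+c) = (b:ℝ)^c*(b:ℝ) := by rw [add_comm]; exact pow_succ _ _
    rw [p1, p2]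
    have hKc : ((b:ℝ)^c) ≠ 0 := by positivity
    field_simp
  · rw [if_neg hkc]
    rcases Nat.lt_or_ge (c+1) k with h | h
    · rw [if_pos (by omega), if_pos h, sub_self, mul_zero]
    · have hk : k = c+1 := by omega
      rw [if_pos (by omega), if_neg (by omega)]
      have : z/(b:ℝ)^(c+1) = z*z := by
        rw [hz, hk]
        field_simp
      rw [this, sub_self, mul_zero]

end OneDim

noncomputable def mB {n s : ℕ} (b : ℕ) (P : Fin n → Fin s → ℝ) (k : Fin s → ℕ) (l : Fin n) : ℕ :=
  (Finset.univ.filter fun j : Fin n =>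
    j ≠ l ∧ ∀ r : Fin s, (k r : ℕ∞) ≤ gammaB b (P l r) (P j r)).card

noncomputable def nB {n s : ℕ} (b : ℕ) (P : Fin n → Fin s → ℝ) (i : Fin s → ℕ) (l : Fin n) : ℕ :=
  (Finset.univ.filter fun j : Fin n =>
    j ≠ l ∧ ∀ r : Fin s, gammaB b (P l r) (P j r) = (i r : ℕ∞)).card

noncomputable def MB {n s : ℕ} (b : ℕ) (P : Fin n → Fin s → ℝ) (k : Fin s → ℕ) : ℕ :=
  ∑ l : Fin n, mB b P k l

noncomputable def NB {n s : ℕ} (b : ℕ) (P : Fin n → Fin s → ℝ) (i : Fin s → ℕ) : ℕ :=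
  ∑ l : Fin n, nB b P i l

noncomputable def CB {n s : ℕ} (b : ℕ) (P : Fin n → Fin s → ℝ) (k : Fin s → ℕ) : ℝ :=
  (b : ℝ) ^ (∑ j, k j) * (MB b P k : ℝ) / ((n : ℝ) * ((n : ℝ) - 1))

def DsetS (b s : ℕ) (i : Fin s → ℕ) : Set ((Fin s → ℝ) × (Fin s → ℝ)) :=
  {p | (∀ j, p.1 j ∈ Set.Ico (0 : ℝ) 1) ∧ (∀ j, p.2 j ∈ Set.Ico (0 : ℝ) 1) ∧
    ∀ j, gammaB b (p.1 j) (p.2 j) = (i j : ℕ∞)}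

def Rset (s : ℕ) (x y : Fin s → ℝ) : Set ((Fin s → ℝ) × (Fin s → ℝ)) :=
  (Set.univ.pi fun j => Set.Ico 0 (x j)) ×ˢ (Set.univ.pi fun j => Set.Ico 0 (y j))

noncomputable def ViS (b s : ℕ) (i : Fin s → ℕ) (x y : Fin s → ℝ) : ℝ :=
  (volume (Rset s x y ∩ DsetS b s i)).toReal

noncomputable def psi {n s : ℕ} (b : ℕ) (P : Fin n → Fin s → ℝ) (x y : Fin s → ℝ) : ℝ :=
  if ∀ j, gammaB b (x j) (y j) ≠ ⊤ then
    (NB b P (fun j => (gammaB b (x j) (y j)).toNat) : ℝ) *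
      (b : ℝ) ^ (s + ∑ j, (gammaB b (x j) (y j)).toNat) /
      (((b : ℝ) - 1) ^ s * ((n : ℝ) * ((n : ℝ) - 1)))
  else 0





section SDim
variable {n s : ℕ} (b : ℕ)

/-- The (finite) gamma vector of a pair of points. -/
noncomputable def cvec (P : Fin n → Fin s → ℝ) (l j : Fin n) : Fin s → ℕ :=
  fun r => (gammaB b (P l r) (P j r)).toNat

def Tset (s : ℕ) (b : ℕ) (c : Fin s → ℕ) (x y : Fin s → ℝ) : Set ((Fin s → ℝ) × (Fin s → ℝ)) :=
  {p | ∀ r, (p.1 r, p.2 r) ∈ GsetD b (c r) (x r) (y r)}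

lemma measurableSet_Tset (hb : 2 ≤ b) {x y : Fin s → ℝ} (hx : ∀ r, x r ≤ 1) (hy : ∀ r, y r ≤ 1)
    (c : Fin s → ℕ) : MeasurableSet (Tset s b c x y) := by
  have heq : Tset s b c x y = ⋂ r, (fun p : (Fin s → ℝ) × (Fin s → ℝ) => (p.1 r, p.2 r)) ⁻¹'
      GsetD b (c r) (x r) (y r) := by
    ext p; simp [Tset, Set.mem_iInter]
  rw [heq]
  exact MeasurableSet.iInter fun r =>
    (measurableSet_GsetD hb (hx r) (hy r) (c r)).preimage
      (((measurable_pi_apply r).comp measurable_fst).prodMk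
        ((measurable_pi_apply r).comp measurable_snd))

lemma Tset_subset_Rset (c : Fin s → ℕ) (x y : Fin s → ℝ) :
    Tset s b c x y ⊆ Rset s x y := by
  rintro p hp
  refine ⟨fun r _ => (hp r).1, fun r _ => (hp r).2.1⟩

lemma volume_Rset_ne_top {x y : Fin s → ℝ} : volume (Rset s x y) ≠ ⊤ := by
  rw [Rset, Measure.volume_eq_prod, Measure.prod_prod, volume_pi_pi, volume_pi_pi]
  refine ENNReal.mul_ne_top ?_ ?_ <;>
  · refine (ENNReal.prod_lt_top fun r _ => ?_).ne
    rw [Real.volume_Ico]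
    exact ENNReal.ofReal_lt_top

lemma volume_Tset (hb : 2 ≤ b) {x y : Fin s → ℝ} (hx : ∀ r, x r ≤ 1) (hy : ∀ r, y r ≤ 1)
    (c : Fin s → ℕ) :
    volume (Tset s b c x y) = ∏ r, volume (GsetD b (c r) (x r) (y r)) := by
  have hmp := volume_measurePreserving_arrowProdEquivProdArrow ℝ ℝ (Fin s)
  have hpre : (MeasurableEquiv.arrowProdEquivProdArrow ℝ ℝ (Fin s)) ⁻¹' (Tset s b c x y) =
      Set.univ.pi (fun r => GsetD b (c r) (x r) (y r)) := by
    ext q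
    simp only [Set.mem_preimage, MeasurableEquiv.arrowProdEquivProdArrow,
      Equiv.arrowProdEquivProdArrow, MeasurableEquiv.coe_mk, Equiv.coe_fn_mk, Tset,
      Set.mem_setOf_eq, Set.mem_pi, Set.mem_univ, forall_true_left, true_implies]
  rw [← hmp.measure_preimage (measurableSet_Tset b hb hx hy c).nullMeasurableSet, hpre,
    volume_pi_pi]

lemma volume_Tset_ne_top (c : Fin s → ℕ) (x y : Fin s → ℝ) :
    volume (Tset s b c x y) ≠ ⊤ :=
  fun h => volume_Rset_ne_top
    (top_le_iff.mp (h ▸ measure_mono (Tset_subset_Rset b c x y)))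

lemma measurableSet_Rset (x y : Fin s → ℝ) : MeasurableSet (Rset s x y) :=
  (MeasurableSet.univ_pi fun _ => measurableSet_Ico).prod
    (MeasurableSet.univ_pi fun _ => measurableSet_Ico)

lemma integrable_indT (hb : 2 ≤ b) {x y : Fin s → ℝ} (hx : ∀ r, x r ≤ 1) (hy : ∀ r, y r ≤ 1)
    (c : Fin s → ℕ) (K : ℝ) :
    Integrable ((Tset s b c x y).indicator (fun _ => K))
      (volume.restrict (Rset s x y)) := by
  rw [integrable_indicator_iff (measurableSet_Tset b hb hx hy c)]
  refine integrableOn_const (lt_top_iff_ne_top.1 ?_)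
  refine lt_of_le_of_lt ((Measure.restrict_apply_le _ _).trans (le_refl _)) ?_
  exact lt_top_iff_ne_top.2 (volume_Tset_ne_top b c x y)

lemma integral_indT (hb : 2 ≤ b) {x y : Fin s → ℝ} (hx : ∀ r, x r ≤ 1) (hy : ∀ r, y r ≤ 1)
    (c : Fin s → ℕ) (K : ℝ) :
    ∫ p in Rset s x y, (Tset s b c x y).indicator (fun _ => K) p =
      K * ∏ r, FF b (c r) (x r) (y r) := by
  rw [setIntegral_indicator (measurableSet_Tset b hb hx hy c),
    Set.inter_eq_right.2 (Tset_subset_Rset b c x y), setIntegral_const, measureReal_def,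
    volume_Tset b hb hx hy c, ENNReal.toReal_prod, smul_eq_mul, mul_comm]
  rfl

lemma W_eq (c : Fin s → ℕ) : ∏ r : Fin s, (b:ℝ)^(1 + c r)/((b:ℝ)-1) =
    (b:ℝ)^(s + ∑ r, c r)/((b:ℝ)-1)^s := by
  rw [Finset.prod_div_distrib, Finset.prod_const, Finset.card_univ, Fintype.card_fin]
  congr 1
  have h1 : ∑ r : Fin s, (1 + c r) = s + ∑ r, c r := by
    rw [Finset.sum_add_distrib, Finset.sum_const, Finset.card_univ, Fintype.card_fin,
      smul_eq_mul, mul_one]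
  rw [← h1, ← Finset.prod_pow_eq_pow_sum]

lemma psi_pointwise (hb : 2 ≤ b) (hn : 2 ≤ n) (P : Fin n → Fin s → ℝ)
    (hP : ∀ i j, P i j ∈ Set.Ico (0:ℝ) 1) (hdist : ∀ j : Fin s, Function.Injective fun i => P i j)
    {x y : Fin s → ℝ} (hx : ∀ j, x j ≤ 1) (hy : ∀ j, y j ≤ 1)
    {p : (Fin s → ℝ) × (Fin s → ℝ)} (hp : p ∈ Rset s x y) :
    psi b P p.1 p.2 = ((n:ℝ)*((n:ℝ)-1))⁻¹ *
      ∑ l : Fin n, ∑ j ∈ Finset.univ.filter (· ≠ l),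
        (Tset s b (cvec b P l j) x y).indicator
          (fun _ => ∏ r, (b:ℝ)^(1 + cvec b P l j r)/((b:ℝ)-1)) p := by
  obtain ⟨hp1, hp2⟩ := hp
  have hp1' : ∀ r, p.1 r ∈ Set.Ico 0 (x r) := fun r => hp1 r (Set.mem_univ r)
  have hp2' : ∀ r, p.2 r ∈ Set.Ico 0 (y r) := fun r => hp2 r (Set.mem_univ r)
  have hPfin : ∀ (l j : Fin n), j ≠ l → ∀ r, gammaB b (P l r) (P j r) ≠ ⊤ :=
    fun l j hjl r => gammaB_ne_top hb (hP l r) (hP j r) (fun hh => hjl (hdist r hh).symm)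
  by_cases hfin : ∀ j, gammaB b (p.1 j) (p.2 j) ≠ ⊤
  · rw [psi, if_pos hfin]
    set i : Fin s → ℕ := fun j => (gammaB b (p.1 j) (p.2 j)).toNat with hi
    have hgam : ∀ r, gammaB b (p.1 r) (p.2 r) = ((i r : ℕ) : ℕ∞) :=
      fun r => (ENat.coe_toNat (hfin r)).symm
    have hmem : ∀ (c : Fin s → ℕ), p ∈ Tset s b c x y ↔ ∀ r, c r = i r := by
      intro c
      constructor
      · intro h r
        have h3 := (h r).2.2
        rw [hgam r] at h3
        exact_mod_cast h3.symm
      · intro h r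
        exact ⟨hp1' r, hp2' r, by rw [h r, ← hgam r]⟩
    have hterm : ∀ (l jj : Fin n), jj ≠ l →
        (Tset s b (cvec b P l jj) x y).indicator
          (fun _ => ∏ r, (b:ℝ)^(1 + cvec b P l jj r)/((b:ℝ)-1)) p
        = if (∀ r, gammaB b (P l r) (P jj r) = ((i r : ℕ) : ℕ∞)) then
            (∏ r, (b:ℝ)^(1 + i r)/((b:ℝ)-1)) else 0 := by
      intro l jj hjl
      have hcv : (∀ r, cvec b P l jj r = i r) ↔
          (∀ r, gammaB b (P l r) (P jj r) = ((i r : ℕ):ℕ∞)) := by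
        constructor
        · intro h r
          rw [← h r, cvec, ENat.coe_toNat (hPfin l jj hjl r)]
        · intro h r
          rw [cvec, h r]
          simp
      by_cases hc : ∀ r, cvec b P l jj r = i r
      · rw [Set.indicator_of_mem ((hmem _).2 hc), if_pos (hcv.1 hc)]
        exact Finset.prod_congr rfl fun r _ => by rw [hc r]
      · rw [Set.indicator_of_notMem (fun hmem' => hc ((hmem _).1 hmem')),
          if_neg (fun hh => hc (hcv.2 hh))]
    have hsum : ∑ l : Fin n, ∑ j ∈ Finset.univ.filter (· ≠ l),
        (Tset s b (cvec b P l j) x y).indicator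
          (fun _ => ∏ r, (b:ℝ)^(1 + cvec b P l j r)/((b:ℝ)-1)) p
        = (NB b P i : ℝ) * ∏ r, (b:ℝ)^(1 + i r)/((b:ℝ)-1) := by
      rw [NB]
      push_cast
      rw [Finset.sum_mul]
      refine Finset.sum_congr rfl fun l _ => ?_
      rw [nB, Finset.card_filter]
      push_cast
      rw [Finset.sum_mul, Finset.sum_filter]
      refine Finset.sum_congr rfl fun jj _ => ?_
      by_cases hjl : jj ≠ l
      · rw [if_pos hjl, hterm l jj hjl]
        by_cases hcond : ∀ r, gammaB b (P l r) (P jj r) = ((i r:ℕ):ℕ∞)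
        · rw [if_pos hcond, if_pos ⟨hjl, hcond⟩, one_mul]
        · rw [if_neg hcond, if_neg (fun hh => hcond hh.2), zero_mul]
      · rw [if_neg hjl, if_neg (fun hh => hjl hh.1), zero_mul]
    rw [hsum, W_eq]
    have hb1 : (0:ℝ) < (b:ℝ)-1 := by have := one_lt_B hb; linarith
    have hN : (0:ℝ) < (n:ℝ)*((n:ℝ)-1) := by
      have h2 : (2:ℝ) ≤ (n:ℝ) := by exact_mod_cast hn
      nlinarith
    rw [eq_inv_mul_iff_mul_eq₀ (ne_of_gt hN)]
    have hBs : ((b:ℝ)-1)^s ≠ 0 := by positivity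
    have hn1 : (n:ℝ) - 1 ≠ 0 := by
      have h2 : (2:ℝ) ≤ (n:ℝ) := by exact_mod_cast hn
      linarith
    field_simp
  · rw [psi, if_neg hfin]
    push_neg at hfin
    obtain ⟨r0, hr0⟩ := hfin
    have hz : ∑ l : Fin n, ∑ j ∈ Finset.univ.filter (· ≠ l),
        (Tset s b (cvec b P l j) x y).indicator
          (fun _ => ∏ r, (b:ℝ)^(1 + cvec b P l j r)/((b:ℝ)-1)) p = 0 := by
      refine Finset.sum_eq_zero fun l _ => Finset.sum_eq_zero fun j hj => ?_
      refine Set.indicator_of_notMem (fun hmem' => ?_) _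
      have := (hmem' r0).2.2
      rw [hr0] at this
      exact (ENat.top_ne_coe _) this
    rw [hz, mul_zero]

lemma integral_psi (hb : 2 ≤ b) (hn : 2 ≤ n) (P : Fin n → Fin s → ℝ)
    (hP : ∀ i j, P i j ∈ Set.Ico (0:ℝ) 1) (hdist : ∀ j : Fin s, Function.Injective fun i => P i j)
    {x y : Fin s → ℝ} (hx : ∀ j, x j ∈ Set.Icc (0:ℝ) 1) (hy : ∀ j, y j ∈ Set.Icc (0:ℝ) 1) :
    ∫ p in Rset s x y, psi b P p.1 p.2 = ((n:ℝ)*((n:ℝ)-1))⁻¹ *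
      ∑ l : Fin n, ∑ j ∈ Finset.univ.filter (· ≠ l),
        ∏ r, ffD b (cvec b P l j r) (x r) (y r) := by
  have hx1 : ∀ j, x j ≤ 1 := fun j => (hx j).2
  have hy1 : ∀ j, y j ≤ 1 := fun j => (hy j).2
  rw [setIntegral_congr_fun (measurableSet_Rset x y)
    (fun p hp => psi_pointwise b hb hn P hP hdist hx1 hy1 hp)]
  rw [MeasureTheory.integral_const_mul]
  congr 1
  rw [integral_finset_sum _ (fun l _ => integrable_finset_sum _
    (fun j _ => integrable_indT b hb hx1 hy1 _ _))]
  refine Finset.sum_congr rfl fun l _ => ?_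
  rw [integral_finset_sum _ (fun j _ => integrable_indT b hb hx1 hy1 _ _)]
  refine Finset.sum_congr rfl fun j _ => ?_
  rw [integral_indT b hb hx1 hy1 _ _, ← Finset.prod_mul_distrib]
  exact Finset.prod_congr rfl fun r _ => rfl

end SDim

section Comb
variable {n s : ℕ} (b : ℕ)

lemma prod_ite_zero' (p : Fin s → Prop) [DecidablePred p] (f : Fin s → ℝ) :
    (∏ r, if p r then f r else 0) = if (∀ r, p r) then ∏ r, f r else 0 := by
  by_cases h : ∀ r, p r
  · rw [if_pos h]
    exact Finset.prod_congr rfl fun r _ => if_pos (h r)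
  · rw [if_neg h]
    push_neg at h
    obtain ⟨r0, hr0⟩ := h
    exact Finset.prod_eq_zero (Finset.mem_univ r0) (if_neg hr0)

lemma MB_eq (hb : 2 ≤ b) (P : Fin n → Fin s → ℝ)
    (hP : ∀ i j, P i j ∈ Set.Ico (0:ℝ) 1) (hdist : ∀ j : Fin s, Function.Injective fun i => P i j)
    (k : Fin s → ℕ) :
    (MB b P k : ℝ) = ∑ l : Fin n, ∑ j ∈ Finset.univ.filter (· ≠ l),
      (if (∀ r, k r ≤ cvec b P l j r) then (1:ℝ) else 0) := by
  rw [MB]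
  push_cast
  refine Finset.sum_congr rfl fun l _ => ?_
  rw [mB, Finset.card_filter]
  push_cast
  rw [Finset.sum_filter]
  refine Finset.sum_congr rfl fun j _ => ?_
  by_cases hjl : j ≠ l
  · have hne : ∀ r, gammaB b (P l r) (P j r) ≠ ⊤ :=
      fun r => gammaB_ne_top hb (hP l r) (hP j r) (fun hh => hjl (hdist r hh).symm)
    have hiff : (∀ r, (k r:ℕ∞) ≤ gammaB b (P l r) (P j r)) ↔ (∀ r, k r ≤ cvec b P l j r) := by
      constructor
      · intro h r
        have h2 := h r
        rw [← ENat.coe_toNat (hne r), Nat.cast_le] at h2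
        exact h2
      · intro h r
        rw [← ENat.coe_toNat (hne r), Nat.cast_le]
        exact h r
    rw [if_pos hjl]
    by_cases hc : ∀ r, (k r:ℕ∞) ≤ gammaB b (P l r) (P j r)
    · rw [if_pos ⟨hjl, hc⟩, if_pos (hiff.1 hc)]
    · rw [if_neg (fun hh => hc hh.2), if_neg (fun hh => hc (hiff.2 hh))]
  · rw [if_neg hjl, if_neg (fun hh => hjl hh.1)]

noncomputable def dfD (b : ℕ) (x y : ℝ) : ℕ → ℝ
  | 0 => ffD b 0 x y
  | (t+1) => ffD b (t+1) x y - ffD b t x y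

lemma dfD_nonneg (hb : 2 ≤ b) {x y : ℝ} (hx : x ∈ Set.Icc (0:ℝ) 1) (hy : y ∈ Set.Icc (0:ℝ) 1) :
    ∀ t, 0 ≤ dfD b x y t
  | 0 => ffD_nonneg b 0 hb x y
  | (t+1) => sub_nonneg.2 (ffD_mono hb hx hy t)

lemma sum_dfD (x y : ℝ) (c : ℕ) : ∑ t ∈ Finset.range (c+1), dfD b x y t = ffD b c x y := by
  induction c with
  | zero => simp [dfD]
  | succ c ih =>
    rw [Finset.sum_range_succ, ih]
    show ffD b c x y + (ffD b (c+1) x y - ffD b c x y) = _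
    ring

lemma prod_ffD_eq (x y : Fin s → ℝ) (c : Fin s → ℕ) (CM : ℕ) (hCM : ∀ r, c r ≤ CM) :
    ∏ r, ffD b (c r) (x r) (y r) =
      ∑ kk ∈ Fintype.piFinset (fun _ : Fin s => Finset.range (CM+1)),
        (if (∀ r, kk r ≤ c r) then ∏ r, dfD b (x r) (y r) (kk r) else 0) := by
  have h1 : ∏ r, ffD b (c r) (x r) (y r) =
      ∑ kk ∈ Fintype.piFinset (fun r => Finset.range (c r + 1)),
        ∏ r, dfD b (x r) (y r) (kk r) := by
    rw [← Finset.prod_univ_sum]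
    exact Finset.prod_congr rfl fun r _ => (sum_dfD b (x r) (y r) (c r)).symm
  have h2 : ∑ kk ∈ Fintype.piFinset (fun r => Finset.range (c r + 1)),
        ∏ r, dfD b (x r) (y r) (kk r)
      = ∑ kk ∈ Fintype.piFinset (fun r => Finset.range (c r + 1)),
        (if (∀ r, kk r ≤ c r) then ∏ r, dfD b (x r) (y r) (kk r) else 0) := by
    refine Finset.sum_congr rfl fun kk hk => ?_
    rw [Fintype.mem_piFinset] at hk
    rw [if_pos (fun r => by have := hk r; rw [Finset.mem_range] at this; omega)]
  rw [h1, h2]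
  refine Finset.sum_subset (fun kk hk => ?_) (fun kk _ hnk => ?_)
  · rw [Fintype.mem_piFinset] at *
    intro r
    have := hk r
    rw [Finset.mem_range] at *
    have := hCM r
    omega
  · rw [if_neg]
    intro hcond
    apply hnk
    rw [Fintype.mem_piFinset]
    intro r
    rw [Finset.mem_range]
    have := hcond r
    omega

lemma integral_psi_MB (hb : 2 ≤ b) (hn : 2 ≤ n) (P : Fin n → Fin s → ℝ)
    (hP : ∀ i j, P i j ∈ Set.Ico (0:ℝ) 1) (hdist : ∀ j : Fin s, Function.Injective fun i => P i j)
    {x y : Fin s → ℝ} (hx : ∀ j, x j ∈ Set.Icc (0:ℝ) 1) (hy : ∀ j, y j ∈ Set.Icc (0:ℝ) 1)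
    (CM : ℕ) (hCM : ∀ l j : Fin n, ∀ r, cvec b P l j r ≤ CM) :
    ∫ p in Rset s x y, psi b P p.1 p.2 = ((n:ℝ)*((n:ℝ)-1))⁻¹ *
      ∑ kk ∈ Fintype.piFinset (fun _ : Fin s => Finset.range (CM+1)),
        (MB b P kk : ℝ) * ∏ r, dfD b (x r) (y r) (kk r) := by
  rw [integral_psi b hb hn P hP hdist hx hy]
  congr 1
  calc ∑ l : Fin n, ∑ j ∈ Finset.univ.filter (· ≠ l),
        ∏ r, ffD b (cvec b P l j r) (x r) (y r)
      = ∑ l : Fin n, ∑ j ∈ Finset.univ.filter (· ≠ l),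
          ∑ kk ∈ Fintype.piFinset (fun _ : Fin s => Finset.range (CM+1)),
            (if (∀ r, kk r ≤ cvec b P l j r) then ∏ r, dfD b (x r) (y r) (kk r) else 0) := by
        refine Finset.sum_congr rfl fun l _ => Finset.sum_congr rfl fun j _ => ?_
        exact prod_ffD_eq b x y _ CM (hCM l j)
    _ = ∑ kk ∈ Fintype.piFinset (fun _ : Fin s => Finset.range (CM+1)),
          ∑ l : Fin n, ∑ j ∈ Finset.univ.filter (· ≠ l),
            (if (∀ r, kk r ≤ cvec b P l j r) then ∏ r, dfD b (x r) (y r) (kk r) else 0) := by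
        rw [Finset.sum_congr rfl fun l (_ : l ∈ Finset.univ) => Finset.sum_comm]
        exact Finset.sum_comm
    _ = ∑ kk ∈ Fintype.piFinset (fun _ : Fin s => Finset.range (CM+1)),
          (MB b P kk : ℝ) * ∏ r, dfD b (x r) (y r) (kk r) := by
        refine Finset.sum_congr rfl fun kk _ => ?_
        rw [MB_eq b hb P hP hdist kk, Finset.sum_mul]
        refine Finset.sum_congr rfl fun l _ => ?_
        rw [Finset.sum_mul]
        refine Finset.sum_congr rfl fun j _ => ?_
        split_ifs
        · rw [one_mul]
        · rw [zero_mul]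

/-- A bound dominating all `cvec` values. -/
noncomputable def CMv (P : Fin n → Fin s → ℝ) : ℕ := ∑ l : Fin n, ∑ j : Fin n, ∑ r : Fin s, cvec b P l j r

lemma cvec_le_CMv (P : Fin n → Fin s → ℝ) (l j : Fin n) (r : Fin s) :
    cvec b P l j r ≤ CMv b P := by
  calc cvec b P l j r ≤ ∑ r : Fin s, cvec b P l j r :=
        Finset.single_le_sum (fun _ _ => Nat.zero_le _) (Finset.mem_univ r)
  _ ≤ ∑ j : Fin n, ∑ r : Fin s, cvec b P l j r :=
        Finset.single_le_sum (f := fun j => ∑ r : Fin s, cvec b P l j r)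
          (fun _ _ => Nat.zero_le _) (Finset.mem_univ j)
  _ ≤ CMv b P :=
        Finset.single_le_sum (f := fun l => ∑ j : Fin n, ∑ r : Fin s, cvec b P l j r)
          (fun _ _ => Nat.zero_le _) (Finset.mem_univ l)

end Comb

theorem stmt17 (b n s : ℕ) (hb : 2 ≤ b) (hs : 1 ≤ s) (hn : 2 ≤ n)
    (P P' : Fin n → Fin s → ℝ)
    (hP : ∀ i j, P i j ∈ Set.Ico (0 : ℝ) 1) (hP' : ∀ i j, P' i j ∈ Set.Ico (0 : ℝ) 1)
    (hdist : ∀ j : Fin s, Function.Injective fun i => P i j)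
    (hdist' : ∀ j : Fin s, Function.Injective fun i => P' i j) :
    (∀ x y : Fin s → ℝ, (∀ j, x j ∈ Set.Icc (0 : ℝ) 1) → (∀ j, y j ∈ Set.Icc (0 : ℝ) 1) →
        (∫ p in Rset s x y, psi b P p.1 p.2) ≤ ∫ p in Rset s x y, psi b P' p.1 p.2) ↔
      ∀ k : Fin s → ℕ, CB b P k ≤ CB b P' k := by
  have hB1 : (1:ℝ) < (b:ℝ) := one_lt_B hb
  have hN : (0:ℝ) < (n:ℝ)*((n:ℝ)-1) := by
    have h2 : (2:ℝ) ≤ (n:ℝ) := by exact_mod_cast hn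
    nlinarith
  constructor
  · intro h k
    set x : Fin s → ℝ := fun r => ((b:ℝ)^(k r))⁻¹ with hxdef
    have hx : ∀ j, x j ∈ Set.Icc (0:ℝ) 1 := by
      intro j
      constructor
      · positivity
      · exact inv_le_one_of_one_le₀ (one_le_pow₀ (by linarith))
    have h2 := h x x hx hx
    rw [integral_psi b hb hn P hP hdist hx hx,
      integral_psi b hb hn P' hP' hdist' hx hx] at h2
    have heval : ∀ (Q : Fin n → Fin s → ℝ),
        (∀ i j, Q i j ∈ Set.Ico (0:ℝ) 1) → (∀ j : Fin s, Function.Injective fun i => Q i j) →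
        ∑ l : Fin n, ∑ j ∈ Finset.univ.filter (· ≠ l),
          ∏ r, ffD b (cvec b Q l j r) (x r) (x r)
        = (MB b Q k : ℝ) * ∏ r, ((b:ℝ)^(k r))⁻¹ := by
      intro Q hQ hdQ
      rw [MB_eq b hb Q hQ hdQ k, Finset.sum_mul]
      refine Finset.sum_congr rfl fun l _ => ?_
      rw [Finset.sum_mul]
      refine Finset.sum_congr rfl fun j _ => ?_
      have hprod : ∏ r, ffD b (cvec b Q l j r) (x r) (x r) =
          ∏ r, (if k r ≤ cvec b Q l j r then ((b:ℝ)^(k r))⁻¹ else 0) :=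
        Finset.prod_congr rfl fun r _ => ffD_diag hb (k r) (cvec b Q l j r)
      rw [hprod, prod_ite_zero']
      split_ifs
      · rw [one_mul]
      · rw [zero_mul]
    rw [heval P hP hdist, heval P' hP' hdist'] at h2
    have hW : (0:ℝ) < ∏ r, ((b:ℝ)^(k r))⁻¹ := Finset.prod_pos fun r _ => by positivity
    have e : ∀ m : ℝ, ((n:ℝ)*((n:ℝ)-1))⁻¹ * (m * ∏ r, ((b:ℝ)^(k r))⁻¹) =
        m * ((∏ r, ((b:ℝ)^(k r))⁻¹) * ((n:ℝ)*((n:ℝ)-1))⁻¹) := fun m => by ring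
    rw [e, e] at h2
    have hMB : (MB b P k : ℝ) ≤ (MB b P' k : ℝ) :=
      le_of_mul_le_mul_right h2 (by positivity)
    rw [CB, CB, div_le_div_iff_of_pos_right hN]
    exact mul_le_mul_of_nonneg_left hMB (by positivity)
  · intro h x y hx hy
    set CM := CMv b P + CMv b P' with hCM
    have hCMP : ∀ l j : Fin n, ∀ r, cvec b P l j r ≤ CM :=
      fun l j r => le_trans (cvec_le_CMv b P l j r) (Nat.le_add_right _ _)
    have hCMP' : ∀ l j : Fin n, ∀ r, cvec b P' l j r ≤ CM :=
      fun l j r => le_trans (cvec_le_CMv b P' l j r) (Nat.le_add_left _ _)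
    rw [integral_psi_MB b hb hn P hP hdist hx hy CM hCMP,
      integral_psi_MB b hb hn P' hP' hdist' hx hy CM hCMP']
    refine mul_le_mul_of_nonneg_left ?_ (by positivity)
    refine Finset.sum_le_sum fun kk _ => ?_
    have hMB : (MB b P kk : ℝ) ≤ (MB b P' kk : ℝ) := by
      have h3 := h kk
      rw [CB, CB, div_le_div_iff_of_pos_right hN] at h3
      have hpow : (0:ℝ) < (b:ℝ)^(∑ j, kk j) := by positivity
      exact le_of_mul_le_mul_left h3 hpow
    exact mul_le_mul_of_nonneg_right hMB
      (Finset.prod_nonneg fun r _ => dfD_nonneg b hb (hx r) (hy r) (kk r))
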